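/- Let f : U → U₁ be a strict C¹ isomorphism between two open subsets of K^n and let u ∈ S'(U). Then a point (x₀,ξ₀) ∈ U × (K^n ∖ {0}) is Λ-micro-locally smooth for u if and only if the point (f(x₀), (ᵗDf(x₀))^{-1}(ξ₀)) is Λ-micro-locally smooth for the push-forward f_*u ∈ S'(U₁). -/

import Mathlib

open MeasureTheory Filter Topology
open scoped BigOperators Classical

noncomputable section

/-- Axiomatization of a non-archimedean local field: a topological field equipped with a
surjective discrete valuation `ord : K → ℤ ∪ {∞}` whose closed balls are compact open and
form a neighborhood basis at every point. -/
class NALocalField (K : Type) [Field K] [TopologicalSpace K] where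
  ord : K → WithTop ℤ
  ord_eq_top_iff : ∀ x : K, ord x = ⊤ ↔ x = 0
  ord_mul : ∀ x y : K, ord (x * y) = ord x + ord y
  ord_add : ∀ x y : K, min (ord x) (ord y) ≤ ord (x + y)
  ord_surjective : ∀ m : ℤ, ∃ x : K, ord x = (m : WithTop ℤ)
  isOpen_ball : ∀ m : ℤ, IsOpen {x : K | (m : WithTop ℤ) ≤ ord x}
  isCompact_ball : ∀ m : ℤ, IsCompact {x : K | (m : WithTop ℤ) ≤ ord x}
  nhds_basis : ∀ x : K, (nhds x).HasBasis (fun _ : ℤ => True)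
      (fun m => {y : K | (m : WithTop ℤ) ≤ ord (y - x)})

variable {K : Type} [Field K] [TopologicalSpace K] [IsTopologicalRing K] [NALocalField K]

/-- The minimum of the valuations of the coordinates of a vector; `|v| = q^{-ordVec v}`. -/
def ordVec {ι : Type} [Fintype ι] (v : ι → K) : WithTop ℤ :=
  Finset.univ.inf fun i => NALocalField.ord (v i)

/-- The ball of valuative radius `r` around `x` in `K^ι`. -/
def pball {ι : Type} [Fintype ι] (x : ι → K) (r : ℤ) : Set (ι → K) :=
  {y | (r : WithTop ℤ) ≤ ordVec (x - y)}

section SB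
variable {α : Type} [TopologicalSpace α]

/-- Schwartz–Bruhat functions on a subset `X ⊆ α`: locally constant compactly supported
`ℂ`-valued functions on `X` (as functions on the subtype). -/
def IsSB (X : Set α) (f : X → ℂ) : Prop :=
  IsLocallyConstant f ∧ HasCompactSupport f

/-- A distribution on `X`: a functional which is `ℂ`-linear on Schwartz–Bruhat functions. -/
def IsDistribution (X : Set α) (u : (X → ℂ) → ℂ) : Prop :=
  (∀ (c : ℂ) (f : X → ℂ), IsSB X f → u (c • f) = c * u f) ∧
  (∀ f g : X → ℂ, IsSB X f → IsSB X g → u (f + g) = u f + u g)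

/-- Schwartz–Bruhat functions on an open subset `U ⊆ α`, realized as locally constant
compactly supported functions on `α` whose support is contained in `U`. -/
def IsSBOn (U : Set α) (f : α → ℂ) : Prop :=
  IsLocallyConstant f ∧ HasCompactSupport f ∧ tsupport f ⊆ U

/-- A distribution on an open set `U ⊆ α`, in the ambient-function realization. -/
def IsDistributionOn (U : Set α) (u : (α → ℂ) → ℂ) : Prop :=
  (∀ (c : ℂ) (f : α → ℂ), IsSBOn U f → u (c • f) = c * u f) ∧
  (∀ f g : α → ℂ, IsSBOn U f → IsSBOn U g → u (f + g) = u f + u g)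

end SB

/-- `ψ` is an additive character of `K` which is trivial on the maximal ideal and
nontrivial on the ring of integers. -/
def IsStandardChar (ψ : AddChar K ℂ) : Prop :=
  (∀ x : K, (1 : WithTop ℤ) ≤ NALocalField.ord x → ψ x = 1) ∧
  (∃ x : K, (0 : WithTop ℤ) ≤ NALocalField.ord x ∧ ψ x ≠ 1)

/-- `Λ` is an open subgroup of finite index of `(K^×, ×)`. -/
structure IsOpenFinIndexSubgroup (Λ : Set K) : Prop where
  one_mem : (1 : K) ∈ Λ
  mul_mem : ∀ a ∈ Λ, ∀ b ∈ Λ, a * b ∈ Λ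
  inv_mem : ∀ a ∈ Λ, a⁻¹ ∈ Λ
  ne_zero : ∀ a ∈ Λ, a ≠ 0
  isOpen : IsOpen Λ
  finiteIndex : ∃ T : Finset K, ∀ x : K, x ≠ 0 → ∃ t ∈ T, t * x ∈ Λ

section Fourier
variable (ψ : AddChar K ℂ)

/-- `F(φu)(ξ) = u(x ↦ φ(x) ψ(x·ξ))` for a functional `u`. -/
def FTrans {ι : Type} [Fintype ι] (u : ((ι → K) → ℂ) → ℂ) (φ : (ι → K) → ℂ)
    (ξ : ι → K) : ℂ :=
  u fun x => φ x * ψ (∑ i, x i * ξ i)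

/-- `Λ`-microlocal smoothness of a distribution on an open subset `U ⊆ K^ι` at a point
`(x₀, ξ₀)`: there are neighborhoods `U₀ ∋ x₀` and `V₀ ∋ ξ₀` such that for every
Schwartz–Bruhat `φ` supported in `U₀` there is `N ∈ ℤ` with `F(φu)(λξ) = 0` for all
`ξ ∈ V₀` and all `λ ∈ Λ` with `ord λ < N`. -/
def LamSmoothAt (Λ : Set K) {ι : Type} [Fintype ι] (U : Set (ι → K))
    (u : ((ι → K) → ℂ) → ℂ) (x₀ ξ₀ : ι → K) : Prop :=
  ∃ U₀ V₀ : Set (ι → K), IsOpen U₀ ∧ IsOpen V₀ ∧ x₀ ∈ U₀ ∧ ξ₀ ∈ V₀ ∧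
    ∀ φ : (ι → K) → ℂ, IsSBOn U φ → tsupport φ ⊆ U₀ →
      ∃ N : ℤ, ∀ lam ∈ Λ, NALocalField.ord lam < (N : WithTop ℤ) →
        ∀ ξ ∈ V₀, FTrans ψ u φ (fun i => lam * ξ i) = 0

/-- The `Λ`-wave front set of a distribution on an open subset `U ⊆ K^ι`: the complement
in `U × (K^ι ∖ {0})` of the set of `Λ`-smooth points. -/
def WFset (Λ : Set K) {ι : Type} [Fintype ι] (U : Set (ι → K))
    (u : ((ι → K) → ℂ) → ℂ) : Set ((ι → K) × (ι → K)) :=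
  {p | p.1 ∈ U ∧ p.2 ≠ 0 ∧ ¬ LamSmoothAt ψ Λ U u p.1 p.2}

end Fourier

section StrictC1
variable {ι ι' : Type} [Fintype ι] [Fintype ι']

/-- `f` is strictly differentiable at `a` within the set `s`, with derivative matrix `A`:
`|f x - f y - A·(x - y)| / |x - y| → 0` as `(x, y) → (a, a)` within `s × s`, expressed
valuatively. -/
def HasStrictDerivWithin (f : (ι → K) → ι' → K) (A : Matrix ι' ι K) (s : Set (ι → K))
    (a : ι → K) : Prop :=
  ∀ c : ℤ, ∀ᶠ p : (ι → K) × (ι → K) in nhdsWithin (a, a) (s ×ˢ s),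
    (c : WithTop ℤ) + ordVec (p.1 - p.2) ≤ ordVec (f p.1 - f p.2 - A.mulVec (p.1 - p.2))

/-- `f` is strict `C¹` on `s`. -/
def StrictC1Within (f : (ι → K) → ι' → K) (s : Set (ι → K)) : Prop :=
  ∀ a ∈ s, ∃ A : Matrix ι' ι K, HasStrictDerivWithin f A s a

/-- `X ⊆ K^ι` is a strict `C¹` submanifold of dimension `ℓ`: every point of `X` admits an
ambient strict `C¹` chart flattening `X` onto an `ℓ`-dimensional coordinate subspace. -/
def IsSubmanifold (X : Set (ι → K)) (ℓ : ℕ) : Prop :=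
  X.Nonempty ∧ ∀ x ∈ X, ∃ (U V : Set (ι → K)) (f g : (ι → K) → ι → K),
    IsOpen U ∧ IsOpen V ∧ x ∈ U ∧ Set.MapsTo f U V ∧ Set.MapsTo g V U ∧
    (∀ y ∈ U, g (f y) = y) ∧ (∀ z ∈ V, f (g z) = z) ∧
    StrictC1Within f U ∧ StrictC1Within g V ∧
    ∃ J : Finset ι, J.card = ℓ ∧ f '' (X ∩ U) = V ∩ {z | ∀ i ∉ J, z i = 0}

end StrictC1

/-- The push-forward `f_*u` of a distribution on an open `U`: `(f_*u)(φ) = u(φ ∘ f)`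
(with `φ ∘ f` cut off outside `U`). -/
def pushOn {ι ι' : Type} [Fintype ι] [Fintype ι'] (U : Set (ι → K))
    (f : (ι → K) → ι' → K) (u : ((ι → K) → ℂ) → ℂ) : ((ι' → K) → ℂ) → ℂ :=
  fun φ => u fun x => if x ∈ U then φ (f x) else 0

section Aux

set_option linter.unusedSectionVars false

open NALocalField

variable {ι : Type} [Fintype ι]

lemma ord_zero : ord (0 : K) = ⊤ := (ord_eq_top_iff 0).2 rfl

lemma ord_ne_top {x : K} (hx : x ≠ 0) : ord x ≠ ⊤ := fun h => hx ((ord_eq_top_iff x).1 h)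

lemma exists_ord_eq {x : K} (hx : x ≠ 0) : ∃ e : ℤ, ord x = (e : WithTop ℤ) := by
  rcases WithTop.ne_top_iff_exists.1 (ord_ne_top hx) with ⟨e, he⟩
  exact ⟨e, he.symm⟩

lemma ord_one : ord (1 : K) = 0 := by
  have h := ord_mul (1 : K) 1
  rw [one_mul] at h
  rcases exists_ord_eq (one_ne_zero (α := K)) with ⟨e, he⟩
  rw [he, ← WithTop.coe_add, WithTop.coe_inj] at h
  have : e = 0 := by omega
  rw [he, this]; rfl

lemma ord_neg (x : K) : ord (-x) = ord x := by
  rcases eq_or_ne x 0 with rfl | hx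
  · rw [neg_zero]
  have hm : ord ((-1 : K) * (-1 : K)) = ord (-1 : K) + ord (-1 : K) := ord_mul _ _
  rw [neg_one_mul, neg_neg, ord_one] at hm
  rcases exists_ord_eq (neg_ne_zero.2 (one_ne_zero (α := K))) with ⟨e, he⟩
  rw [he, ← WithTop.coe_add] at hm
  have he0 : e = 0 := by
    have := WithTop.coe_inj.1 hm.symm
    omega
  have : ord (-x) = ord (-1 : K) + ord x := by
    rw [← ord_mul]; ring_nf
  rw [this, he, he0]
  simp

lemma ord_sub_comm (x y : K) : ord (x - y) = ord (y - x) := by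
  rw [← ord_neg (x - y)]; ring_nf

lemma ord_inv {x : K} (hx : x ≠ 0) {e : ℤ} (he : ord x = (e : WithTop ℤ)) :
    ord x⁻¹ = ((-e : ℤ) : WithTop ℤ) := by
  have h := ord_mul x x⁻¹
  rw [mul_inv_cancel₀ hx, ord_one, he] at h
  rcases exists_ord_eq (inv_ne_zero hx) with ⟨e', he'⟩
  rw [he', ← WithTop.coe_add] at h
  have : e' = -e := by
    have := WithTop.coe_inj.1 h.symm
    omega
  rw [he', this]

lemma ord_sum {s : Finset ι} {v : ι → K} :
    (s.inf fun i => ord (v i)) ≤ ord (∑ i ∈ s, v i) := by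
  classical
  induction s using Finset.induction_on with
  | empty => simp [ord_zero]
  | insert _ _ hnot ih =>
    rename_i a s
    rw [Finset.sum_insert hnot, Finset.inf_insert]
    exact le_trans (min_le_min le_rfl ih) (ord_add _ _)

lemma ordVec_le (v : ι → K) (i : ι) : ordVec v ≤ ord (v i) :=
  Finset.inf_le (Finset.mem_univ i)

lemma le_ordVec {v : ι → K} {c : WithTop ℤ} (h : ∀ i, c ≤ ord (v i)) : c ≤ ordVec v :=
  Finset.le_inf fun i _ => h i

lemma ordVec_zero : ordVec (0 : ι → K) = ⊤ :=
  le_antisymm le_top (le_ordVec fun i => by simp [ord_zero])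

lemma ordVec_eq_top_iff {v : ι → K} : ordVec v = ⊤ ↔ v = 0 := by
  constructor
  · intro h
    funext i
    have := (ordVec_le v i).trans_eq' h
    exact (ord_eq_top_iff _).1 (top_le_iff.1 this)
  · rintro rfl; exact ordVec_zero

lemma ordVec_neg (v : ι → K) : ordVec (-v) = ordVec v := by
  unfold ordVec
  congr 1; funext i
  exact ord_neg (v i)

lemma ordVec_sub_comm (v w : ι → K) : ordVec (v - w) = ordVec (w - v) := by
  rw [← ordVec_neg (v - w)]; ring_nf

lemma min_ordVec_le_add {v w : ι → K} :
    min (ordVec v) (ordVec w) ≤ ordVec (v + w) := by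
  refine le_ordVec fun i => ?_
  refine le_trans ?_ (ord_add (v i) (w i))
  exact min_le_min (ordVec_le v i) (ordVec_le w i)

lemma min_ordVec_le_sub {v w : ι → K} :
    min (ordVec v) (ordVec w) ≤ ordVec (v - w) := by
  have := min_ordVec_le_add (v := v) (w := -w)
  rw [ordVec_neg] at this
  simpa [sub_eq_add_neg] using this

lemma ordVec_smul_ge (c : K) (v : ι → K) :
    ord c + ordVec v ≤ ordVec (fun i => c * v i) := by
  refine le_ordVec fun i => ?_
  rw [ord_mul]
  exact add_le_add le_rfl (ordVec_le v i)

lemma ord_dot (v w : ι → K) :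
    ordVec v + ordVec w ≤ ord (∑ i, v i * w i) := by
  refine le_trans ?_ ord_sum
  refine Finset.le_inf fun i _ => ?_
  rw [ord_mul]
  exact add_le_add (ordVec_le v i) (ordVec_le w i)

/-! ### pball basics -/

lemma mem_pball {x y : ι → K} {r : ℤ} : y ∈ pball x r ↔ (r : WithTop ℤ) ≤ ordVec (x - y) :=
  Iff.rfl

lemma mem_pball_self (x : ι → K) (r : ℤ) : x ∈ pball x r := by
  simp [mem_pball, ordVec_zero]

lemma mem_pball_comm {x y : ι → K} {r : ℤ} : y ∈ pball x r ↔ x ∈ pball y r := by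
  rw [mem_pball, mem_pball, ordVec_sub_comm]

lemma pball_eq_of_mem {x y : ι → K} {r : ℤ} (h : y ∈ pball x r) : pball y r = pball x r := by
  ext z
  rw [mem_pball, mem_pball]
  constructor <;> intro hz
  · calc (r : WithTop ℤ) ≤ min (ordVec (x - y)) (ordVec (y - z)) := le_min h hz
    _ ≤ ordVec (x - z) := by simpa using min_ordVec_le_add (v := x - y) (w := y - z)
  · rw [mem_pball, ordVec_sub_comm] at h
    calc (r : WithTop ℤ) ≤ min (ordVec (y - x)) (ordVec (x - z)) := le_min h hz
    _ ≤ ordVec (y - z) := by simpa using min_ordVec_le_add (v := y - x) (w := x - z)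

lemma pball_mono {x : ι → K} {r r' : ℤ} (h : r ≤ r') : pball x r' ⊆ pball x r := by
  intro z hz
  exact le_trans (show (r : WithTop ℤ) ≤ (r' : WithTop ℤ) from WithTop.coe_le_coe.2 h) hz

lemma pball_subset_pball {x y : ι → K} {r r' : ℤ} (hr : r ≤ r') (h : y ∈ pball x r) :
    pball y r' ⊆ pball x r := by
  rw [← pball_eq_of_mem h]
  exact pball_mono hr

lemma isOpen_pball (x : ι → K) (r : ℤ) : IsOpen (pball x r) := by
  have : pball x r = ⋂ i, (fun y : ι → K => x i - y i) ⁻¹' {t : K | (r : WithTop ℤ) ≤ ord t} := by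
    ext y
    simp only [Set.mem_iInter, Set.mem_preimage, Set.mem_setOf_eq, mem_pball]
    exact ⟨fun h i => le_trans h (ordVec_le _ i), fun h => le_ordVec h⟩
  rw [this]
  refine isOpen_iInter_of_finite fun i => ?_
  exact (isOpen_ball r).preimage ((continuous_const.sub (continuous_apply i)))

lemma t2space_K : T2Space K := by
  constructor
  intro x y hxy
  rcases exists_ord_eq (sub_ne_zero.2 hxy) with ⟨e, he⟩
  have hopen : ∀ z : K, IsOpen {w : K | ((e + 1 : ℤ) : WithTop ℤ) ≤ ord (w - z)} := by
    intro z
    exact (isOpen_ball (e + 1)).preimage (continuous_id.sub continuous_const)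
  refine ⟨_, _, hopen x, hopen y, by simp [ord_zero], by simp [ord_zero], ?_⟩
  rw [Set.disjoint_iff]
  rintro z ⟨hzx, hzy⟩
  simp only [Set.mem_setOf_eq] at hzx hzy
  have : ((e + 1 : ℤ) : WithTop ℤ) ≤ ord (x - y) := by
    have hxz : x - y = (z - y) + (x - z) := by ring
    rw [hxz]
    refine le_trans (le_min hzy ?_) (ord_add _ _)
    rwa [ord_sub_comm] at hzx
  rw [he] at this
  exact absurd (WithTop.coe_le_coe.1 this) (by omega)


lemma isCompact_pball (x : ι → K) (r : ℤ) : IsCompact (pball x r) := by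
  have hsub : pball x r ⊆ Set.pi Set.univ
      (fun i => {t : K | (r : WithTop ℤ) ≤ ord (t - x i)}) := by
    intro y hy i _
    have := le_trans hy (ordVec_le _ i)
    simpa [ord_sub_comm] using this
  have hclosed : IsClosed (pball x r) := by
    have : pball x r = ⋂ i, (fun y : ι → K => x i - y i) ⁻¹' {t : K | (r : WithTop ℤ) ≤ ord t} := by
      ext y
      simp only [Set.mem_iInter, Set.mem_preimage, Set.mem_setOf_eq, mem_pball]
      exact ⟨fun h i => le_trans h (ordVec_le _ i), fun h => le_ordVec h⟩
    rw [this]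
    refine isClosed_iInter fun i => ?_
    refine IsClosed.preimage ((continuous_const.sub (continuous_apply i))) ?_
    have hc : IsCompact {t : K | (r : WithTop ℤ) ≤ ord t} := isCompact_ball r
    haveI := t2space_K (K := K)
    exact hc.isClosed
  -- compactness via Tychonoff
  have hcpt : IsCompact (Set.pi Set.univ
      (fun i : ι => {t : K | (r : WithTop ℤ) ≤ ord (t - x i)})) := by
    refine isCompact_univ_pi fun i => ?_
    have : {t : K | (r : WithTop ℤ) ≤ ord (t - x i)} =
        (fun t : K => t - x i) ⁻¹' {t : K | (r : WithTop ℤ) ≤ ord t} := rfl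
    have himg : {t : K | (r : WithTop ℤ) ≤ ord (t - x i)} =
        (fun t : K => t + x i) '' {t : K | (r : WithTop ℤ) ≤ ord t} := by
      ext t
      constructor
      · intro ht; exact ⟨t - x i, ht, by ring⟩
      · rintro ⟨s, hs, rfl⟩; simpa using hs
    rw [himg]
    exact (isCompact_ball r).image (by continuity)
  exact hcpt.of_isClosed_subset hclosed hsub

lemma isClosed_pball (x : ι → K) (r : ℤ) : IsClosed (pball x r) := by
  have : pball x r = ⋂ i, (fun y : ι → K => x i - y i) ⁻¹' {t : K | (r : WithTop ℤ) ≤ ord t} := by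
    ext y
    simp only [Set.mem_iInter, Set.mem_preimage, Set.mem_setOf_eq, mem_pball]
    exact ⟨fun h i => le_trans h (ordVec_le _ i), fun h => le_ordVec h⟩
  rw [this]
  refine isClosed_iInter fun i => ?_
  haveI := t2space_K (K := K)
  exact IsClosed.preimage ((continuous_const.sub (continuous_apply i)))
    (isCompact_ball r).isClosed

lemma pball_mem_nhds (x : ι → K) (r : ℤ) : pball x r ∈ nhds x :=
  (isOpen_pball x r).mem_nhds (mem_pball_self x r)

lemma exists_pball_subset {x : ι → K} {W : Set (ι → K)} (hW : W ∈ nhds x) :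
    ∃ r : ℤ, pball x r ⊆ W := by
  rw [nhds_pi, Filter.mem_pi] at hW
  obtain ⟨I, hIfin, t, ht, hsub⟩ := hW
  have : ∀ i, ∃ r : ℤ, {y : K | (r : WithTop ℤ) ≤ ord (y - x i)} ⊆ t i := by
    intro i
    have := ((nhds_basis (x i)).mem_iff).1 (ht i)
    rcases this with ⟨r, _, hr⟩
    exact ⟨r, hr⟩
  choose rr hrr using this
  rcases Finset.exists_le (Finset.image rr Finset.univ) with ⟨r, hr⟩
  refine ⟨r, fun y hy => ?_⟩
  refine hsub ?_
  intro i _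
  refine hrr i ?_
  have h1 : (r : WithTop ℤ) ≤ ord (x i - y i) := le_trans hy (ordVec_le _ i)
  rw [ord_sub_comm] at h1
  exact le_trans (WithTop.coe_le_coe.2
    (hr (rr i) (Finset.mem_image_of_mem rr (Finset.mem_univ i)))) h1

variable (ψ : AddChar K ℂ)

/-! ### Schwartz–Bruhat helper lemmas -/

lemma IsSBOn.zero {U : Set (ι → K)} : IsSBOn U (0 : (ι → K) → ℂ) := by
  refine ⟨IsLocallyConstant.const 0, ?_, ?_⟩
  · rw [HasCompactSupport]
    have : tsupport (0 : (ι → K) → ℂ) = ∅ := by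
      simp [tsupport, Function.support, closure_empty]
    rw [this]; exact isCompact_empty
  · have : tsupport (0 : (ι → K) → ℂ) = ∅ := by
      simp [tsupport, Function.support, closure_empty]
    rw [this]; exact Set.empty_subset U

lemma IsSBOn.add {U : Set (ι → K)} {f g : (ι → K) → ℂ} (hf : IsSBOn U f) (hg : IsSBOn U g) :
    IsSBOn U (f + g) := by
  refine ⟨hf.1.add hg.1, ?_, ?_⟩
  · exact hf.2.1.add hg.2.1
  · refine subset_trans ?_ (Set.union_subset hf.2.2 hg.2.2)
    refine subset_trans (closure_mono (Function.support_add f g)) ?_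
    rw [tsupport, tsupport, ← closure_union]

lemma tsupport_mul_left_subset {f g : (ι → K) → ℂ} :
    tsupport (fun x => f x * g x) ⊆ tsupport f := by
  refine closure_mono fun x hx => ?_
  simp only [Function.mem_support] at hx ⊢
  intro h; exact hx (by rw [h, zero_mul])

lemma IsSBOn.mul_lc {U : Set (ι → K)} {φ w : (ι → K) → ℂ} (hφ : IsSBOn U φ)
    (hw : IsLocallyConstant w) : IsSBOn U (fun x => φ x * w x) := by
  refine ⟨hφ.1.mul hw, ?_, subset_trans tsupport_mul_left_subset hφ.2.2⟩
  exact IsCompact.of_isClosed_subset hφ.2.1 isClosed_closure tsupport_mul_left_subset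

lemma lc_psi (hψ : IsStandardChar ψ) : IsLocallyConstant fun t : K => ψ t := by
  rw [IsLocallyConstant.iff_exists_open]
  intro t
  refine ⟨{w : K | (1 : WithTop ℤ) ≤ ord (w - t)}, ?_, by simp [ord_zero], fun y hy => ?_⟩
  · exact (isOpen_ball 1).preimage (continuous_id.sub continuous_const)
  · have : y = t + (y - t) := by ring
    rw [this, ψ.map_add_eq_mul, hψ.1 _ hy, mul_one]

lemma lc_char_linear (hψ : IsStandardChar ψ) (c : K) (ξ : ι → K) :
    IsLocallyConstant fun x : ι → K => ψ (c + ∑ i, x i * ξ i) := by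
  refine (lc_psi ψ hψ).comp_continuous ?_
  exact continuous_const.add (continuous_finset_sum _ fun i _ =>
    (continuous_apply i).mul continuous_const)

lemma isSBOn_indicator_pball {U : Set (ι → K)} {a : ι → K} {m : ℤ} (h : pball a m ⊆ U) :
    IsSBOn U (fun x => if x ∈ pball a m then (1 : ℂ) else 0) := by
  have hts : tsupport (fun x => if x ∈ pball a m then (1 : ℂ) else 0) ⊆ pball a m := by
    rw [tsupport]
    refine subset_trans (closure_mono ?_) (isClosed_pball a m).closure_subset
    intro x hx
    simp only [Function.mem_support] at hx
    by_contra hxm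
    simp [hxm] at hx
  refine ⟨?_, ?_, subset_trans hts h⟩
  · rw [IsLocallyConstant.iff_exists_open]
    intro x
    by_cases hx : x ∈ pball a m
    · exact ⟨pball a m, isOpen_pball a m, hx, fun y hy => by simp [hx, hy]⟩
    · refine ⟨(pball a m)ᶜ, (isClosed_pball a m).isOpen_compl, hx, fun y hy => ?_⟩
      simp only [Set.mem_compl_iff] at hy
      simp [hx, hy]
  · exact IsCompact.of_isClosed_subset (isCompact_pball a m) isClosed_closure hts

lemma u_zero {U : Set (ι → K)} {u : ((ι → K) → ℂ) → ℂ} (hu : IsDistributionOn U u) :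
    u 0 = 0 := by
  have := hu.1 0 0 IsSBOn.zero
  simpa using this

lemma isSBOn_sum {U : Set (ι → K)} {α : Type} (R : Finset α) (h : α → (ι → K) → ℂ)
    (hh : ∀ a ∈ R, IsSBOn U (h a)) : IsSBOn U (∑ a ∈ R, h a) := by
  classical
  induction R using Finset.induction_on with
  | empty => simpa using IsSBOn.zero (U := U) (K := K) (ι := ι)
  | insert _ _ hnot ih =>
    rename_i a R
    rw [Finset.sum_insert hnot]
    exact (hh a (Finset.mem_insert_self a R)).add
      (ih fun b hb => hh b (Finset.mem_insert_of_mem hb))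

lemma u_sum {U : Set (ι → K)} {u : ((ι → K) → ℂ) → ℂ} (hu : IsDistributionOn U u)
    {α : Type} (R : Finset α) (h : α → (ι → K) → ℂ) (hh : ∀ a ∈ R, IsSBOn U (h a)) :
    u (∑ a ∈ R, h a) = ∑ a ∈ R, u (h a) := by
  classical
  induction R using Finset.induction_on with
  | empty => simpa using u_zero hu
  | insert _ _ hnot ih =>
    rename_i a R
    rw [Finset.sum_insert hnot, Finset.sum_insert hnot,
      hu.2 _ _ (hh a (Finset.mem_insert_self a R))
        (isSBOn_sum R h fun b hb => hh b (Finset.mem_insert_of_mem hb)),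
      ih fun b hb => hh b (Finset.mem_insert_of_mem hb)]

/-! ### Covering by disjoint balls -/

lemma exists_mem_of_ball_eq {a b : ι → K} {m : ℤ}
    (z : ι → K) (hza : z ∈ pball a m) (hzb : z ∈ pball b m) : pball a m = pball b m := by
  rw [← pball_eq_of_mem hza, ← pball_eq_of_mem hzb]

lemma prune_balls (m : ℤ) (t : Finset (ι → K)) :
    ∃ R : Finset (ι → K), R ⊆ t ∧ (⋃ a ∈ t, pball a m) ⊆ (⋃ a ∈ R, pball a m) ∧
      ∀ a ∈ R, ∀ b ∈ R, a ≠ b → pball a m ≠ pball b m := by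
  classical
  induction t using Finset.induction_on with
  | empty => exact ⟨∅, le_rfl, by simp, by simp⟩
  | insert _ _ hnot ih =>
    rename_i a t
    obtain ⟨R, hRt, hcov, hpw⟩ := ih
    by_cases hex : ∃ b ∈ R, pball a m = pball b m
    · obtain ⟨b, hbR, hab⟩ := hex
      refine ⟨R, hRt.trans (Finset.subset_insert a t), ?_, hpw⟩
      intro z hz
      simp only [Set.mem_iUnion, exists_prop] at hz ⊢
      obtain ⟨c, hc, hzc⟩ := hz
      rcases Finset.mem_insert.1 hc with rfl | hct
      · exact ⟨b, hbR, hab ▸ hzc⟩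
      · have : z ∈ ⋃ a ∈ R, pball a m := hcov (Set.mem_biUnion hct hzc)
        simpa [Set.mem_iUnion, exists_prop] using this
    · have haR : a ∉ R := fun h => hex ⟨a, h, rfl⟩
      refine ⟨insert a R, Finset.insert_subset_insert a hRt, ?_, ?_⟩
      · intro z hz
        simp only [Set.mem_iUnion, exists_prop] at hz ⊢
        obtain ⟨c, hc, hzc⟩ := hz
        rcases Finset.mem_insert.1 hc with heq | hct
        · rw [heq] at hzc
          exact ⟨a, Finset.mem_insert_self a R, hzc⟩
        · have : z ∈ ⋃ a ∈ R, pball a m := hcov (Set.mem_biUnion hct hzc)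
          simp only [Set.mem_iUnion, exists_prop] at this
          obtain ⟨d, hd, hzd⟩ := this
          exact ⟨d, Finset.mem_insert_of_mem hd, hzd⟩
      · intro c hc d hd hcd
        rcases Finset.mem_insert.1 hc with rfl | hcR <;> rcases Finset.mem_insert.1 hd with rfl | hdR
        · exact absurd rfl hcd
        · exact fun h => hex ⟨d, hdR, h⟩
        · exact fun h => hex ⟨c, hcR, h.symm⟩
        · exact hpw c hcR d hdR hcd

lemma exists_ball_cover {S : Set (ι → K)} (hS : IsCompact S) (m : ℤ) :
    ∃ R : Finset (ι → K), (∀ a ∈ R, a ∈ S) ∧ (S ⊆ ⋃ a ∈ R, pball a m) ∧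
      ∀ a ∈ R, ∀ b ∈ R, a ≠ b → pball a m ≠ pball b m := by
  obtain ⟨t, htS, hcov⟩ := hS.elim_nhds_subcover (fun x => pball x m)
    (fun x _ => pball_mem_nhds x m)
  obtain ⟨R, hRt, hcov', hpw⟩ := prune_balls m t
  exact ⟨R, fun a ha => htS a (hRt ha), subset_trans hcov hcov', hpw⟩

lemma exists_uniform_scale {φ : (ι → K) → ℂ} (hlc : IsLocallyConstant φ)
    (hcs : HasCompactSupport φ) :
    ∃ m₀ : ℤ, ∀ m : ℤ, m₀ ≤ m → ∀ a x y : ι → K,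
      x ∈ pball a m → y ∈ pball a m → φ x = φ y := by
  classical
  have hloc : ∀ x : ι → K, ∃ r : ℤ, ∀ y ∈ pball x r, φ y = φ x := by
    intro x
    obtain ⟨O, hO, hxO, hOc⟩ := hlc.exists_open x
    obtain ⟨r, hr⟩ := exists_pball_subset (hO.mem_nhds hxO)
    exact ⟨r, fun y hy => hOc y (hr hy)⟩
  choose rr hrr using hloc
  obtain ⟨t, htS, hcov⟩ := hcs.elim_nhds_subcover (fun x => pball x (rr x))
    (fun x _ => pball_mem_nhds x (rr x))
  obtain ⟨m₀, hm₀⟩ := Finset.exists_le (Finset.image rr t)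
  refine ⟨m₀, fun m hm a x y hx hy => ?_⟩
  by_cases hz : ∃ z ∈ pball a m, z ∈ tsupport φ
  · obtain ⟨z, hzm, hzs⟩ := hz
    have : z ∈ ⋃ c ∈ t, pball c (rr c) := hcov hzs
    simp only [Set.mem_iUnion, exists_prop] at this
    obtain ⟨c, hct, hzc⟩ := this
    have hrc : rr c ≤ m :=
      le_trans (hm₀ (rr c) (Finset.mem_image_of_mem rr hct)) hm
    have hsub : pball a m ⊆ pball c (rr c) := by
      rw [pball_eq_of_mem (mem_pball_comm.1 hzm)]
      exact pball_subset_pball hrc hzc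
    rw [hrr c x (hsub hx), hrr c y (hsub hy)]
  · push_neg at hz
    rw [image_eq_zero_of_notMem_tsupport (hz x hx), image_eq_zero_of_notMem_tsupport (hz y hy)]

/-! ### Character sums -/

lemma wt_add_le {a b : ℤ} {x y : WithTop ℤ} (hx : (a : WithTop ℤ) ≤ x)
    (hy : (b : WithTop ℤ) ≤ y) : ((a + b : ℤ) : WithTop ℤ) ≤ x + y := by
  rw [WithTop.coe_add]; exact add_le_add hx hy

lemma psi_ne_zero (t : K) : ψ t ≠ 0 := by
  intro h
  have : ψ t * ψ (-t) = 1 := by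
    rw [← ψ.map_add_eq_mul, add_neg_cancel, ψ.map_zero_eq_one]
  rw [h, zero_mul] at this
  exact zero_ne_one this

lemma exists_bad_char (hψ : IsStandardChar ψ) {w : ι → K} {m : ℤ}
    (h : ¬ ((m : WithTop ℤ) ≤ ordVec w)) :
    ∃ ζ : ι → K, ((1 - m : ℤ) : WithTop ℤ) ≤ ordVec ζ ∧ ψ (∑ i, w i * ζ i) ≠ 1 := by
  classical
  have hne : (Finset.univ : Finset ι).Nonempty := by
    by_contra hempty
    rw [Finset.not_nonempty_iff_eq_empty] at hempty
    have : ordVec w = ⊤ := by unfold ordVec; rw [hempty]; rfl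
    exact h (this ▸ le_top)
  obtain ⟨i, _, hi⟩ := Finset.exists_mem_eq_inf Finset.univ hne fun i => ord (w i)
  have hwi : ord (w i) < (m : WithTop ℤ) := by
    rw [← hi]; exact lt_of_not_ge h
  have hwine : w i ≠ 0 := by
    intro h0
    rw [h0, ord_zero] at hwi
    exact (not_top_lt hwi)
  obtain ⟨e, he⟩ := exists_ord_eq hwine
  have hem : e < m := by
    rw [he] at hwi; exact_mod_cast hwi
  obtain ⟨x₁, hx₁ord, hx₁ne⟩ := hψ.2
  refine ⟨Pi.single i (x₁ * (w i)⁻¹), ?_, ?_⟩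
  · refine le_ordVec fun j => ?_
    by_cases hj : j = i
    · subst hj
      rw [Pi.single_eq_same, ord_mul, ord_inv hwine he]
      calc ((1 - m : ℤ) : WithTop ℤ) ≤ ((0 + (-e) : ℤ) : WithTop ℤ) := by
            exact_mod_cast (by omega : (1 - m : ℤ) ≤ 0 + (-e))
        _ ≤ ord x₁ + ((-e : ℤ) : WithTop ℤ) := by
            rw [WithTop.coe_add]; exact add_le_add hx₁ord le_rfl
    · rw [Pi.single_eq_of_ne hj, ord_zero]; exact le_top
  · have hsum : ∑ j, w j * (Pi.single i (x₁ * (w i)⁻¹) : ι → K) j = x₁ := by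
      rw [Finset.sum_eq_single i]
      · rw [Pi.single_eq_same]
        field_simp
      · intro j _ hj
        rw [Pi.single_eq_of_ne hj, mul_zero]
      · intro hnot; exact absurd (Finset.mem_univ i) hnot
    rw [hsum]; exact hx₁ne

lemma tsupport_indicator_pball {a : ι → K} {m : ℤ} :
    tsupport (fun x : ι → K => if x ∈ pball a m then (1 : ℂ) else 0) ⊆ pball a m := by
  rw [tsupport]
  refine subset_trans (closure_mono ?_) (isClosed_pball a m).closure_subset
  intro x hx
  simp only [Function.mem_support] at hx
  by_contra hxm
  simp [hxm] at hx

lemma char_sum_indicator (hψ : IsStandardChar ψ) {κ m : ℤ} (hκm : κ ≤ m)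
    {a₀ a : ι → K} (ha : a ∈ pball a₀ κ) :
    ∃ Z : Finset (ι → K), 0 < Z.card ∧
      (∀ ζ ∈ Z, ((1 - m : ℤ) : WithTop ℤ) ≤ ordVec ζ) ∧
      ∀ x ∈ pball a₀ κ, (∑ ζ ∈ Z, ψ (∑ i, (x i - a i) * ζ i)) =
        (Z.card : ℂ) * (if x ∈ pball a m then 1 else 0) := by
  classical
  obtain ⟨R, hRmem, hRcov, hRpw⟩ :=
    exists_ball_cover (isCompact_pball (0 : ι → K) (1 - m)) (1 - κ)
  have hmemS : ∀ ζ ∈ R, ((1 - m : ℤ) : WithTop ℤ) ≤ ordVec ζ := by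
    intro ζ hζ
    have := hRmem ζ hζ
    rw [mem_pball, zero_sub, ordVec_neg] at this
    exact this
  have huniq : ∀ v : ι → K, ((1 - m : ℤ) : WithTop ℤ) ≤ ordVec v →
      ∃ z ∈ R, v ∈ pball z (1 - κ) := by
    intro v hv
    have : v ∈ pball (0 : ι → K) (1 - m) := by
      rw [mem_pball, zero_sub, ordVec_neg]; exact hv
    have := hRcov this
    simpa only [Set.mem_iUnion, exists_prop] using this
  refine ⟨R, ?_, hmemS, ?_⟩
  · -- nonempty
    obtain ⟨z, hz, _⟩ := huniq 0 (by rw [ordVec_zero]; exact le_top)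
    exact Finset.card_pos.2 ⟨z, hz⟩
  intro x hx
  set w : ι → K := fun i => x i - a i with hw
  suffices hmain : (∑ ζ ∈ R, ψ (∑ i, w i * ζ i)) =
      (R.card : ℂ) * (if x ∈ pball a m then 1 else 0) by
    simpa only [hw] using hmain
  have hwκ : (κ : WithTop ℤ) ≤ ordVec w := by
    have h1 : (κ : WithTop ℤ) ≤ ordVec (a₀ - a) := ha
    have h2 : (κ : WithTop ℤ) ≤ ordVec (a₀ - x) := hx
    have hid : w = (a₀ - a) - (a₀ - x) := by
      funext i
      show x i - a i = (a₀ i - a i) - (a₀ i - x i)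
      ring
    rw [hid]
    exact le_trans (le_min h1 h2) min_ordVec_le_sub
  by_cases hxB : x ∈ pball a m
  · have hone : ∀ ζ ∈ R, ψ (∑ i, w i * ζ i) = 1 := by
      intro ζ hζ
      refine hψ.1 _ ?_
      have hwm : (m : WithTop ℤ) ≤ ordVec w := by
        have h3 : (m : WithTop ℤ) ≤ ordVec (a - x) := hxB
        rwa [show a - x = -w by funext i; show a i - x i = -(x i - a i); ring,
          ordVec_neg] at h3
      calc (1 : WithTop ℤ) = ((m + (1 - m) : ℤ) : WithTop ℤ) := by norm_num
        _ ≤ ordVec w + ordVec ζ := wt_add_le hwm (hmemS ζ hζ)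
        _ ≤ ord (∑ i, w i * ζ i) := ord_dot w ζ
    rw [if_pos hxB, mul_one, Finset.sum_congr rfl hone]
    simp
  · rw [if_neg hxB, mul_zero]
    have hwnotm : ¬ ((m : WithTop ℤ) ≤ ordVec w) := by
      intro hcon
      apply hxB
      show (m : WithTop ℤ) ≤ ordVec (a - x)
      rwa [show a - x = -w by funext i; show a i - x i = -(x i - a i); ring, ordVec_neg]
    obtain ⟨ζ₀, hζ₀ord, hζ₀ne⟩ := exists_bad_char ψ hψ hwnotm
    have hex : ∀ ζ ∈ R, ∃ z ∈ R, (ζ + ζ₀) ∈ pball z (1 - κ) := by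
      intro ζ hζ
      exact huniq (ζ + ζ₀) (le_trans (le_min (hmemS ζ hζ) hζ₀ord) min_ordVec_le_add)
    set rmap : (ι → K) → (ι → K) := fun ζ =>
      if h : ∃ z ∈ R, (ζ + ζ₀) ∈ pball z (1 - κ) then h.choose else ζ with hrmap
    have hrmem : ∀ ζ ∈ R, rmap ζ ∈ R := by
      intro ζ hζ
      have h := hex ζ hζ
      simp only [hrmap, dif_pos h]
      exact h.choose_spec.1
    have hrball : ∀ ζ ∈ R, (ζ + ζ₀) ∈ pball (rmap ζ) (1 - κ) := by
      intro ζ hζ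
      have h := hex ζ hζ
      simp only [hrmap, dif_pos h]
      exact h.choose_spec.2
    have hrinj : ∀ ζ₁ ∈ R, ∀ ζ₂ ∈ R, rmap ζ₁ = rmap ζ₂ → ζ₁ = ζ₂ := by
      intro ζ₁ h₁ ζ₂ h₂ heq
      by_contra hne
      have hb₁ := hrball ζ₁ h₁
      have hb₂ := hrball ζ₂ h₂
      rw [heq] at hb₁
      have hd : ((1 - κ : ℤ) : WithTop ℤ) ≤ ordVec (ζ₂ - ζ₁) := by
        have hid : ζ₂ - ζ₁ = (rmap ζ₂ - (ζ₁ + ζ₀)) - (rmap ζ₂ - (ζ₂ + ζ₀)) := by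
          funext i
          show ζ₂ i - ζ₁ i = (rmap ζ₂ i - (ζ₁ i + ζ₀ i)) - (rmap ζ₂ i - (ζ₂ i + ζ₀ i))
          ring
        rw [hid]
        exact le_trans (le_min hb₁ hb₂) min_ordVec_le_sub
      exact hRpw ζ₁ h₁ ζ₂ h₂ hne (pball_eq_of_mem (show ζ₁ ∈ pball ζ₂ (1 - κ) from hd))
    have hmul : ∀ ζ ∈ R, ψ (∑ i, w i * rmap ζ i) =
        ψ (∑ i, w i * ζ i) * ψ (∑ i, w i * ζ₀ i) := by
      intro ζ hζ
      have hsplit : ∑ i, w i * rmap ζ i =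
          ((∑ i, w i * ζ i) + ∑ i, w i * ζ₀ i) + ∑ i, w i * (rmap ζ i - ζ i - ζ₀ i) := by
        rw [← Finset.sum_add_distrib, ← Finset.sum_add_distrib]
        exact Finset.sum_congr rfl fun i _ => by ring
      rw [hsplit, ψ.map_add_eq_mul, ψ.map_add_eq_mul]
      have htriv : ψ (∑ i, w i * (rmap ζ i - ζ i - ζ₀ i)) = 1 := by
        refine hψ.1 _ ?_
        have hordd : ((1 - κ : ℤ) : WithTop ℤ) ≤
            ordVec (fun i => rmap ζ i - ζ i - ζ₀ i) := by
          have hb := hrball ζ hζ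
          have hid : (fun i => rmap ζ i - ζ i - ζ₀ i) = rmap ζ - (ζ + ζ₀) := by
            funext i
            show rmap ζ i - ζ i - ζ₀ i = rmap ζ i - (ζ i + ζ₀ i)
            ring
          rw [hid]
          exact hb
        calc (1 : WithTop ℤ) = ((κ + (1 - κ) : ℤ) : WithTop ℤ) := by norm_num
          _ ≤ ordVec w + ordVec (fun i => rmap ζ i - ζ i - ζ₀ i) := wt_add_le hwκ hordd
          _ ≤ ord (∑ i, w i * (rmap ζ i - ζ i - ζ₀ i)) := ord_dot _ _
      rw [htriv, mul_one]
    have hsurj := Finset.surj_on_of_inj_on_of_card_le (s := R) (t := R)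
      (fun ζ _ => rmap ζ) (fun ζ hζ => hrmem ζ hζ)
      (fun ζ₁ ζ₂ h₁ h₂ h => hrinj ζ₁ h₁ ζ₂ h₂ h) le_rfl
    have hre : ∑ ζ ∈ R, ψ (∑ i, w i * rmap ζ i) = ∑ ζ ∈ R, ψ (∑ i, w i * ζ i) := by
      refine Finset.sum_bij (fun ζ (_ : ζ ∈ R) => rmap ζ) (fun ζ hζ => hrmem ζ hζ)
        (fun ζ₁ h₁ ζ₂ h₂ h => hrinj ζ₁ h₁ ζ₂ h₂ h) ?_ (fun ζ hζ => rfl)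
      intro z hz
      obtain ⟨ζ, hζ, hζz⟩ := hsurj z hz
      exact ⟨ζ, hζ, hζz.symm⟩
    have hfinal : (∑ ζ ∈ R, ψ (∑ i, w i * ζ i)) * ψ (∑ i, w i * ζ₀ i)
        = ∑ ζ ∈ R, ψ (∑ i, w i * ζ i) := by
      calc (∑ ζ ∈ R, ψ (∑ i, w i * ζ i)) * ψ (∑ i, w i * ζ₀ i)
          = ∑ ζ ∈ R, ψ (∑ i, w i * ζ i) * ψ (∑ i, w i * ζ₀ i) := by rw [Finset.sum_mul]
        _ = ∑ ζ ∈ R, ψ (∑ i, w i * rmap ζ i) :=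
            Finset.sum_congr rfl fun ζ hζ => (hmul ζ hζ).symm
        _ = ∑ ζ ∈ R, ψ (∑ i, w i * ζ i) := hre
    have hzero : (∑ ζ ∈ R, ψ (∑ i, w i * ζ i)) * (ψ (∑ i, w i * ζ₀ i) - 1) = 0 := by
      rw [mul_sub, hfinal, mul_one, sub_self]
    rcases mul_eq_zero.1 hzero with h0 | h0
    · exact h0
    · exact absurd (sub_eq_zero.1 h0) hζ₀ne

/-- Uniformization: microlocal smoothness gives a single `N` working for all indicators
of small balls, with frequencies in a fixed ball around `ξ₀`. -/
lemma smooth_uniform {Λ : Set K} (hΛ : IsOpenFinIndexSubgroup Λ) (hψ : IsStandardChar ψ)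
    {U : Set (ι → K)} (hUo : IsOpen U) {u : ((ι → K) → ℂ) → ℂ} (hu : IsDistributionOn U u)
    {x₀ ξ₀ : ι → K} (hx₀ : x₀ ∈ U)
    (hsm : LamSmoothAt ψ Λ U u x₀ ξ₀) :
    ∃ κ₀ c₀ N₀ : ℤ, pball x₀ κ₀ ⊆ U ∧
      ∀ (a : ι → K) (m : ℤ), a ∈ pball x₀ κ₀ → κ₀ ≤ m →
      ∀ lam ∈ Λ, ∀ ℓ : ℤ, ord lam = (ℓ : WithTop ℤ) → ℓ < N₀ → m ≤ 1 - c₀ - ℓ →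
        ∀ ξ : ι → K, ((c₀ : WithTop ℤ) ≤ ordVec (ξ₀ - ξ)) →
          FTrans ψ u (fun x => if x ∈ pball a m then (1 : ℂ) else 0)
            (fun i => lam * ξ i) = 0 := by
  classical
  obtain ⟨U₀, V₀, hU₀o, hV₀o, hxU₀, hξV₀, hmain⟩ := hsm
  obtain ⟨κ₀, hκ₀⟩ := exists_pball_subset ((hU₀o.inter hUo).mem_nhds ⟨hxU₀, hx₀⟩)
  obtain ⟨c₀, hc₀⟩ := exists_pball_subset (hV₀o.mem_nhds hξV₀)
  have hBU : pball x₀ κ₀ ⊆ U := hκ₀.trans Set.inter_subset_right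
  have hBU₀ : pball x₀ κ₀ ⊆ U₀ := hκ₀.trans Set.inter_subset_left
  set φ₀ : (ι → K) → ℂ := fun x => if x ∈ pball x₀ κ₀ then (1 : ℂ) else 0 with hφ₀
  have hφ₀SB : IsSBOn U φ₀ := isSBOn_indicator_pball hBU
  obtain ⟨N₀, hN₀⟩ := hmain φ₀ hφ₀SB (tsupport_indicator_pball.trans hBU₀)
  refine ⟨κ₀, c₀, N₀, hBU, ?_⟩
  intro a m ha hm lam hlam ℓ hℓ hℓN hmc ξ hξc
  have hlamne : lam ≠ 0 := hΛ.ne_zero lam hlam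
  obtain ⟨Z, hZpos, hZord, hZsum⟩ := char_sum_indicator ψ hψ hm ha
  have hBsub : pball a m ⊆ pball x₀ κ₀ := pball_subset_pball hm ha
  -- individual modulated test functions
  set hfun : (ι → K) → (ι → K) → ℂ := fun ζ x =>
    (φ₀ x * ψ (∑ i, (x i - a i) * ζ i)) * ψ (∑ i, x i * (lam * ξ i)) with hhfun
  have hptw : (fun x => (if x ∈ pball a m then (1 : ℂ) else 0) * ψ (∑ i, x i * (lam * ξ i)))
      = (Z.card : ℂ)⁻¹ • ∑ ζ ∈ Z, hfun ζ := by
    funext x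
    have hcardne : (Z.card : ℂ) ≠ 0 := Nat.cast_ne_zero.2 hZpos.ne'
    simp only [Pi.smul_apply, smul_eq_mul, Finset.sum_apply, hhfun]
    by_cases hxB₀ : x ∈ pball x₀ κ₀
    · have hφ₀x : φ₀ x = 1 := by simp [hφ₀, hxB₀]
      rw [show (∑ ζ ∈ Z, (φ₀ x * ψ (∑ i, (x i - a i) * ζ i)) * ψ (∑ i, x i * (lam * ξ i)))
          = (∑ ζ ∈ Z, ψ (∑ i, (x i - a i) * ζ i)) * ψ (∑ i, x i * (lam * ξ i)) by
            rw [Finset.sum_mul]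
            exact Finset.sum_congr rfl fun ζ _ => by rw [hφ₀x, one_mul],
        hZsum x hxB₀]
      field_simp
      split_ifs <;> ring_nf <;> simp only [mul_comm lam]
    · have hφ₀x : φ₀ x = 0 := by simp [hφ₀, hxB₀]
      have hxB : x ∉ pball a m := fun hc => hxB₀ (hBsub hc)
      simp [hφ₀x, hxB]
  have hSBζ : ∀ ζ ∈ Z, IsSBOn U (hfun ζ) := by
    intro ζ _
    refine IsSBOn.mul_lc (IsSBOn.mul_lc hφ₀SB ?_) ?_
    · have : (fun x : ι → K => ψ (∑ i, (x i - a i) * ζ i))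
          = fun x : ι → K => ψ ((-∑ i, a i * ζ i) + ∑ i, x i * ζ i) := by
        funext x
        congr 1
        rw [neg_add_eq_sub, ← Finset.sum_sub_distrib]
        exact Finset.sum_congr rfl fun i _ => by ring
      rw [this]
      exact lc_char_linear ψ hψ _ _
    · have : (fun x : ι → K => ψ (∑ i, x i * (lam * ξ i)))
          = fun x : ι → K => ψ ((0 : K) + ∑ i, x i * (lam * ξ i)) := by
        funext x; rw [zero_add]
      rw [this]
      exact lc_char_linear ψ hψ _ _
  -- compute
  rw [FTrans, hptw, hu.1 _ _ (isSBOn_sum Z hfun hSBζ), u_sum hu Z hfun hSBζ]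
  have hterm : ∀ ζ ∈ Z, u (hfun ζ) = 0 := by
    intro ζ hζ
    set ξ' : ι → K := fun i => ξ i + lam⁻¹ * ζ i with hξ'
    have hfeq : hfun ζ = ψ (-∑ i, a i * ζ i) •
        fun x => φ₀ x * ψ (∑ i, x i * (lam * ξ' i)) := by
      funext x
      simp only [hhfun, Pi.smul_apply, smul_eq_mul]
      have h1 : ∑ i, (x i - a i) * ζ i = (-∑ i, a i * ζ i) + ∑ i, x i * ζ i := by
        rw [neg_add_eq_sub, ← Finset.sum_sub_distrib]
        exact Finset.sum_congr rfl fun i _ => by ring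
      have h2 : ∑ i, x i * (lam * ξ' i) = (∑ i, x i * ζ i) + ∑ i, x i * (lam * ξ i) := by
        rw [← Finset.sum_add_distrib]
        refine Finset.sum_congr rfl fun i _ => ?_
        simp only [hξ']
        field_simp
        ring
      rw [h1, ψ.map_add_eq_mul, h2, ψ.map_add_eq_mul]
      ring
    have hξ'V₀ : ξ' ∈ V₀ := by
      refine hc₀ ?_
      show (c₀ : WithTop ℤ) ≤ ordVec (ξ₀ - ξ')
      have hid : ξ₀ - ξ' = (ξ₀ - ξ) - fun i => lam⁻¹ * ζ i := by
        funext i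
        show ξ₀ i - (ξ i + lam⁻¹ * ζ i) = (ξ₀ i - ξ i) - lam⁻¹ * ζ i
        ring
      rw [hid]
      refine le_trans (le_min hξc ?_) min_ordVec_le_sub
      have hζord := hZord ζ hζ
      have hinv : ord lam⁻¹ = ((-ℓ : ℤ) : WithTop ℤ) := ord_inv hlamne hℓ
      calc (c₀ : WithTop ℤ) ≤ ((-ℓ + (1 - m) : ℤ) : WithTop ℤ) := by
            exact_mod_cast (by omega : c₀ ≤ -ℓ + (1 - m))
        _ ≤ ord lam⁻¹ + ordVec ζ := by
            rw [WithTop.coe_add, hinv]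
            exact add_le_add le_rfl hζord
        _ ≤ ordVec (fun i => lam⁻¹ * ζ i) := ordVec_smul_ge lam⁻¹ ζ
    have hvan := hN₀ lam hlam (by rw [hℓ]; exact_mod_cast hℓN) ξ' hξ'V₀
    rw [hfeq, hu.1 _ _ (IsSBOn.mul_lc hφ₀SB (by
      have : (fun x : ι → K => ψ (∑ i, x i * (lam * ξ' i)))
          = fun x : ι → K => ψ ((0 : K) + ∑ i, x i * (lam * ξ' i)) := by
        funext x; rw [zero_add]
      rw [this]
      exact lc_char_linear ψ hψ _ _))]
    rw [show u (fun x => φ₀ x * ψ (∑ i, x i * (lam * ξ' i)))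
        = FTrans ψ u φ₀ (fun i => lam * ξ' i) from rfl, hvan, mul_zero]
  rw [Finset.sum_congr rfl hterm]
  simp

/-! ### Strict differentiability consequences -/

variable {ι' : Type} [Fintype ι']

lemma strict_deriv_ball {f : (ι → K) → ι' → K} {A : Matrix ι' ι K} {s : Set (ι → K)}
    {a : ι → K} (h : HasStrictDerivWithin f A s a) (c : ℤ) :
    ∃ r : ℤ, ∀ x ∈ pball a r ∩ s, ∀ y ∈ pball a r ∩ s,
      (c : WithTop ℤ) + ordVec (x - y) ≤ ordVec (f x - f y - A.mulVec (x - y)) := by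
  have h1 := h c
  rw [eventually_nhdsWithin_iff] at h1
  obtain ⟨W, hW, hWprop⟩ := h1.exists_mem
  rw [mem_nhds_prod_iff] at hW
  obtain ⟨w1, hw1, w2, hw2, hsub⟩ := hW
  obtain ⟨r, hr⟩ := exists_pball_subset (Filter.inter_mem hw1 hw2)
  refine ⟨r, fun x hx y hy => ?_⟩
  have hxy : (x, y) ∈ W := hsub ⟨(hr hx.1).1, (hr hy.1).2⟩
  exact hWprop (x, y) hxy ⟨hx.2, hy.2⟩

lemma exists_mulVec_bound (A : Matrix ι' ι K) :
    ∃ μ : ℤ, ∀ v : ι → K, (μ : WithTop ℤ) + ordVec v ≤ ordVec (A.mulVec v) := by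
  classical
  set ν : WithTop ℤ := Finset.univ.inf fun i : ι' => Finset.univ.inf fun j : ι => ord (A i j)
    with hν
  obtain ⟨μ, hμ⟩ : ∃ μ : ℤ, (μ : WithTop ℤ) ≤ ν := by
    rcases eq_or_ne ν ⊤ with htop | hne
    · exact ⟨0, htop ▸ le_top⟩
    · obtain ⟨k, hk⟩ := WithTop.ne_top_iff_exists.1 hne
      exact ⟨k, hk.le⟩
  refine ⟨μ, fun v => ?_⟩
  refine le_ordVec fun i => ?_
  refine le_trans ?_ (ord_sum (s := Finset.univ) (v := fun j => A i j * v j))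
  refine Finset.le_inf fun j _ => ?_
  rw [ord_mul]
  refine add_le_add (le_trans hμ ?_) (ordVec_le v j)
  exact le_trans (Finset.inf_le (Finset.mem_univ i)) (Finset.inf_le (Finset.mem_univ j))

lemma exists_vecMul_bound (A : Matrix ι ι' K) :
    ∃ μ : ℤ, ∀ v : ι → K, (μ : WithTop ℤ) + ordVec v ≤ ordVec (Matrix.vecMul v A) := by
  classical
  set ν : WithTop ℤ := Finset.univ.inf fun i : ι => Finset.univ.inf fun j : ι' => ord (A i j)
    with hν
  obtain ⟨μ, hμ⟩ : ∃ μ : ℤ, (μ : WithTop ℤ) ≤ ν := by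
    rcases eq_or_ne ν ⊤ with htop | hne
    · exact ⟨0, htop ▸ le_top⟩
    · obtain ⟨k, hk⟩ := WithTop.ne_top_iff_exists.1 hne
      exact ⟨k, hk.le⟩
  refine ⟨μ, fun v => ?_⟩
  refine le_ordVec fun j => ?_
  refine le_trans ?_ (ord_sum (s := Finset.univ) (v := fun i => v i * A i j))
  refine Finset.le_inf fun i _ => ?_
  rw [ord_mul]
  rw [show (μ : WithTop ℤ) + ordVec v = ordVec v + (μ : WithTop ℤ) from add_comm _ _]
  refine add_le_add (ordVec_le v i) (le_trans hμ ?_)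
  exact le_trans (Finset.inf_le (Finset.mem_univ i)) (Finset.inf_le (Finset.mem_univ j))

lemma quantitative_bound {f : (ι → K) → ι' → K} {A : Matrix ι' ι K} {s : Set (ι → K)}
    {a : ι → K} (h : HasStrictDerivWithin f A s a) {μ : ℤ}
    (hμ : ∀ v : ι → K, (μ : WithTop ℤ) + ordVec v ≤ ordVec (A.mulVec v)) :
    ∃ r : ℤ, ∀ x ∈ pball a r ∩ s, ∀ y ∈ pball a r ∩ s,
      ((min μ 0 : ℤ) : WithTop ℤ) + ordVec (x - y) ≤ ordVec (f x - f y) := by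
  obtain ⟨r, hr⟩ := strict_deriv_ball h 0
  refine ⟨r, fun x hx y hy => ?_⟩
  have he := hr x hx y hy
  have hAv := hμ (x - y)
  have hid : f x - f y = (f x - f y - A.mulVec (x - y)) + A.mulVec (x - y) := by
    funext i
    show f x i - f y i = (f x i - f y i - A.mulVec (x - y) i) + A.mulVec (x - y) i
    ring
  rw [hid]
  refine le_trans (le_min ?_ ?_) min_ordVec_le_add
  · exact le_trans (add_le_add (WithTop.coe_le_coe.2 (min_le_right μ 0)) le_rfl) he
  · exact le_trans (add_le_add (WithTop.coe_le_coe.2 (min_le_left μ 0)) le_rfl) hAv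

lemma strictC1_continuousOn {f : (ι → K) → ι' → K} {s : Set (ι → K)} (hs : IsOpen s)
    (hf : StrictC1Within f s) : ContinuousOn f s := by
  intro a ha
  obtain ⟨A, hA⟩ := hf a ha
  obtain ⟨μ, hμ⟩ := exists_mulVec_bound A
  obtain ⟨r0, hr0⟩ := quantitative_bound hA hμ
  show Filter.Tendsto f (nhdsWithin a s) (nhds (f a))
  rw [Filter.tendsto_def]
  intro W hW
  obtain ⟨ρ, hρ⟩ := exists_pball_subset hW
  refine Filter.mem_of_superset ?_ (Set.preimage_mono hρ)
  rw [mem_nhdsWithin]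
  refine ⟨pball a (max r0 (ρ - min μ 0)), isOpen_pball _ _, mem_pball_self _ _, ?_⟩
  intro x hx
  have hxr0 : x ∈ pball a r0 := pball_mono (le_max_left _ _) hx.1
  have hbound := hr0 x ⟨hxr0, hx.2⟩ a ⟨mem_pball_self a r0, ha⟩
  show f x ∈ pball (f a) ρ
  rw [mem_pball, ordVec_sub_comm]
  have hxa : ((max r0 (ρ - min μ 0) : ℤ) : WithTop ℤ) ≤ ordVec (x - a) := by
    rw [ordVec_sub_comm]; exact hx.1
  calc (ρ : WithTop ℤ) ≤ ((min μ 0 + max r0 (ρ - min μ 0) : ℤ) : WithTop ℤ) := by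
        exact_mod_cast (by omega : ρ ≤ min μ 0 + max r0 (ρ - min μ 0))
    _ ≤ ((min μ 0 : ℤ) : WithTop ℤ) + ordVec (x - a) := by
        rw [WithTop.coe_add]; exact add_le_add le_rfl hxa
    _ ≤ ordVec (f x - f a) := hbound

lemma ordVec_single_one [DecidableEq ι] (j : ι) :
    (0 : WithTop ℤ) ≤ ordVec (Pi.single j 1 : ι → K) := by
  refine le_ordVec fun i => ?_
  by_cases hij : i = j
  · subst hij; rw [Pi.single_eq_same, ord_one]
  · rw [Pi.single_eq_of_ne hij, ord_zero]; exact le_top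

lemma chain_inverse [DecidableEq ι] {U U₁ : Set (ι → K)}
    {f g : (ι → K) → ι → K} (hfU : Set.MapsTo f U U₁)
    (hgf : ∀ x ∈ U, g (f x) = x) (hUo : IsOpen U)
    {x₀ : ι → K} (hx₀ : x₀ ∈ U)
    {A B : Matrix ι ι K} (hA : HasStrictDerivWithin f A U x₀)
    (hB : HasStrictDerivWithin g B U₁ (f x₀)) :
    B * A = 1 := by
  classical
  obtain ⟨μA, hμA⟩ := exists_mulVec_bound A
  obtain ⟨μB, hμB⟩ := exists_mulVec_bound B
  obtain ⟨κU, hκU⟩ := exists_pball_subset (hUo.mem_nhds hx₀)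
  obtain ⟨rq, hrq⟩ := quantitative_bound hA hμA
  set μ' : ℤ := min μA 0 with hμ'
  have hkey : ∀ c : ℤ, ∃ r : ℤ, pball x₀ r ⊆ U ∧ ∀ x ∈ pball x₀ r,
      (c : WithTop ℤ) + ordVec (x - x₀) ≤
        ordVec ((B * A).mulVec (x - x₀) - (x - x₀)) := by
    intro c
    obtain ⟨rf, hrf⟩ := strict_deriv_ball hA (c - μB)
    obtain ⟨ρg, hρg⟩ := strict_deriv_ball hB (c - μ')
    refine ⟨max (max rf κU) (max rq (ρg - μ')), ?_, ?_⟩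
    · exact fun y hy => hκU (pball_mono (le_trans (le_max_right rf κU) (le_max_left _ _)) hy)
    intro x hx
    set r : ℤ := max (max rf κU) (max rq (ρg - μ')) with hrdef
    have hxU : x ∈ U := hκU (pball_mono (le_trans (le_max_right rf κU) (le_max_left _ _)) hx)
    have hxrf : x ∈ pball x₀ rf := pball_mono (le_trans (le_max_left rf κU) (le_max_left _ _)) hx
    have hxrq : x ∈ pball x₀ rq := pball_mono (le_trans (le_max_left rq _) (le_max_right _ _)) hx
    have hx₀U : x₀ ∈ U := hx₀
    -- f x close to f x₀
    have hfar : ((μ' : ℤ) : WithTop ℤ) + ordVec (x - x₀) ≤ ordVec (f x - f x₀) :=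
      hrq x ⟨hxrq, hxU⟩ x₀ ⟨mem_pball_self _ _, hx₀U⟩
    have hfxball : f x ∈ pball (f x₀) ρg := by
      rw [mem_pball, ordVec_sub_comm]
      have hxx₀ : ((r : ℤ) : WithTop ℤ) ≤ ordVec (x - x₀) := by
        rw [ordVec_sub_comm]; exact hx
      calc (ρg : WithTop ℤ) ≤ ((μ' + r : ℤ) : WithTop ℤ) := by
            exact_mod_cast (by
              have : ρg - μ' ≤ r := le_trans (le_max_right rq _) (le_max_right _ _)
              omega : ρg ≤ μ' + r)
        _ ≤ ((μ' : ℤ) : WithTop ℤ) + ordVec (x - x₀) := by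
            rw [WithTop.coe_add]; exact add_le_add le_rfl hxx₀
        _ ≤ ordVec (f x - f x₀) := hfar
    -- error terms
    have he₁ := hrf x ⟨hxrf, hxU⟩ x₀ ⟨mem_pball_self _ _, hx₀U⟩
    have he₂ := hρg (f x) ⟨hfxball, hfU hxU⟩ (f x₀) ⟨mem_pball_self _ _, hfU hx₀U⟩
    rw [hgf x hxU, hgf x₀ hx₀U] at he₂
    -- algebraic identity
    have hid : (B * A).mulVec (x - x₀) - (x - x₀) =
        -(B.mulVec (f x - f x₀ - A.mulVec (x - x₀)) +
          (x - x₀ - B.mulVec (f x - f x₀))) := by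
      have h1 : (B * A).mulVec (x - x₀) = B.mulVec (A.mulVec (x - x₀)) :=
        (Matrix.mulVec_mulVec _ _ _).symm
      have h2 : B.mulVec (f x - f x₀ - A.mulVec (x - x₀)) =
          B.mulVec (f x - f x₀) - B.mulVec (A.mulVec (x - x₀)) := by
        rw [sub_eq_add_neg, Matrix.mulVec_add, Matrix.mulVec_neg]
        funext i
        show (B.mulVec (f x - f x₀) + -B.mulVec (A.mulVec (x - x₀))) i = _
        simp [sub_eq_add_neg]
      rw [h1, h2]
      funext i
      simp only [Pi.sub_apply, Pi.neg_apply, Pi.add_apply]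
      ring
    rw [hid, ordVec_neg]
    refine le_trans (le_min ?_ ?_) min_ordVec_le_add
    · -- B e₁ term
      refine le_trans ?_ (hμB _)
      calc (c : WithTop ℤ) + ordVec (x - x₀)
          = ((μB + (c - μB) : ℤ) : WithTop ℤ) + ordVec (x - x₀) := by norm_num
        _ ≤ (μB : WithTop ℤ) + ((c - μB : ℤ) + ordVec (x - x₀)) := by
            rw [WithTop.coe_add, add_assoc]
        _ ≤ (μB : WithTop ℤ) + ordVec (f x - f x₀ - A.mulVec (x - x₀)) :=
            add_le_add le_rfl he₁
    · -- e₂ term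
      have he₂' : ((c - μ' : ℤ) : WithTop ℤ) + ordVec (f x - f x₀) ≤
          ordVec (x - x₀ - B.mulVec (f x - f x₀)) := he₂
      calc (c : WithTop ℤ) + ordVec (x - x₀)
          = ((c - μ' + μ' : ℤ) : WithTop ℤ) + ordVec (x - x₀) := by norm_num
        _ = ((c - μ' : ℤ) : WithTop ℤ) + ((μ' : ℤ) + ordVec (x - x₀)) := by
            rw [WithTop.coe_add, add_assoc]
        _ ≤ ((c - μ' : ℤ) : WithTop ℤ) + ordVec (f x - f x₀) := add_le_add le_rfl hfar
        _ ≤ ordVec (x - x₀ - B.mulVec (f x - f x₀)) := he₂'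
  -- conclude B * A = 1 columnwise
  have hcol : ∀ j : ι, (B * A).mulVec (Pi.single j 1) = Pi.single j 1 := by
    intro j
    set w : ι → K := (B * A).mulVec (Pi.single j 1) - Pi.single j 1 with hwdef
    have hwtop : ∀ c : ℤ, ∀ i, (c : WithTop ℤ) ≤ ord (w i) := by
      intro c i
      obtain ⟨r, hrU, hr⟩ := hkey c
      obtain ⟨t, ht⟩ := ord_surjective (K := K) r
      have htne : t ≠ 0 := by
        intro h0; rw [h0, ord_zero] at ht; exact WithTop.top_ne_coe ht
      set x : ι → K := x₀ + fun i => t * (Pi.single j (1 : K) : ι → K) i with hxdef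
      have hxx₀ : x - x₀ = fun i => t * (Pi.single j (1 : K) : ι → K) i := by
        funext i
        show x₀ i + t * (Pi.single j (1 : K) : ι → K) i - x₀ i =
          t * (Pi.single j (1 : K) : ι → K) i
        ring
      have hordxx : (r : WithTop ℤ) ≤ ordVec (x - x₀) := by
        rw [hxx₀]
        refine le_trans ?_ (ordVec_smul_ge t (Pi.single j 1))
        calc (r : WithTop ℤ) = ord t + 0 := by rw [ht, add_zero]
          _ ≤ ord t + ordVec (Pi.single j 1 : ι → K) := add_le_add le_rfl (ordVec_single_one j)
      have hxball : x ∈ pball x₀ r := by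
        rw [mem_pball, ordVec_sub_comm]; exact hordxx
      have hest := hr x hxball
      have hvecid : (B * A).mulVec (x - x₀) - (x - x₀) = fun i => t * w i := by
        rw [hxx₀]
        have hsm : (B * A).mulVec (fun i => t * (Pi.single j (1 : K) : ι → K) i) =
            fun i => t * (B * A).mulVec (Pi.single j 1) i := by
          have h6 : (fun i => t * (Pi.single j (1 : K) : ι → K) i)
              = t • (Pi.single j (1 : K) : ι → K) := rfl
          rw [h6, Matrix.mulVec_smul]
          rfl
        rw [hsm]
        funext i
        simp only [Pi.sub_apply, hwdef]
        ring
      rw [hvecid] at hest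
      -- extract coordinate i
      have hcoord : (c : WithTop ℤ) + ordVec (x - x₀) ≤ ord t + ord (w i) := by
        refine le_trans hest ?_
        rw [← ord_mul]
        exact ordVec_le _ i
      have hfin : ((c + r : ℤ) : WithTop ℤ) ≤ ((r : ℤ) : WithTop ℤ) + ord (w i) := by
        calc ((c + r : ℤ) : WithTop ℤ) = (c : WithTop ℤ) + (r : WithTop ℤ) := by
              rw [WithTop.coe_add]
          _ ≤ (c : WithTop ℤ) + ordVec (x - x₀) := add_le_add le_rfl hordxx
          _ ≤ ord t + ord (w i) := hcoord
          _ = ((r : ℤ) : WithTop ℤ) + ord (w i) := by rw [ht]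
      have hfin' : ((r : ℤ) : WithTop ℤ) + (c : WithTop ℤ) ≤
          ((r : ℤ) : WithTop ℤ) + ord (w i) := by
        refine le_trans (le_of_eq ?_) hfin
        rw [← WithTop.coe_add, WithTop.coe_inj]
        omega
      exact (WithTop.add_le_add_iff_left (WithTop.coe_ne_top (a := r))).1 hfin'
    have hwzero : w = 0 := by
      funext i
      by_contra hne
      obtain ⟨e, he⟩ := exists_ord_eq hne
      have := hwtop (e + 1) i
      rw [he] at this
      exact absurd (WithTop.coe_le_coe.1 this) (by omega)
    have : (B * A).mulVec (Pi.single j 1) - Pi.single j 1 = 0 := hwzero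
    funext i
    have h5 := congrFun this i
    simp only [Pi.sub_apply, Pi.zero_apply] at h5
    exact sub_eq_zero.1 h5
  refine Matrix.ext fun i j => ?_
  have := congrFun (hcol j) i
  rw [Matrix.mulVec_single_one] at this
  simp only [Matrix.col_apply] at this
  rw [this]
  by_cases hij : i = j
  · subst hij; rw [Pi.single_eq_same, Matrix.one_apply_eq]
  · rw [Pi.single_eq_of_ne hij, Matrix.one_apply_ne hij]

/-! ### Pullback of Schwartz–Bruhat functions and push-forward distributions -/

lemma tsupport_mul_right_subset {f g : (ι → K) → ℂ} :
    tsupport (fun x => f x * g x) ⊆ tsupport g := by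
  refine closure_mono fun x hx => ?_
  simp only [Function.mem_support] at hx ⊢
  intro h; exact hx (by rw [h, mul_zero])

lemma IsSBOn.const_mul {U : Set (ι → K)} {φ : (ι → K) → ℂ} (hφ : IsSBOn U φ) (c : ℂ) :
    IsSBOn U (fun x => c * φ x) := by
  refine ⟨(IsLocallyConstant.const c).mul hφ.1, ?_, subset_trans tsupport_mul_right_subset hφ.2.2⟩
  exact IsCompact.of_isClosed_subset hφ.2.1 isClosed_closure tsupport_mul_right_subset

lemma isSBOn_pullback {U U₁ : Set (ι → K)} (hUo : IsOpen U)
    {f g : (ι → K) → ι → K} (hgU : Set.MapsTo g U₁ U)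
    (hgf : ∀ x ∈ U, g (f x) = x)
    (hfC : ContinuousOn f U) (hgC : ContinuousOn g U₁)
    {φ : (ι → K) → ℂ} (hφ : IsSBOn U₁ φ) :
    IsSBOn U (fun x => if x ∈ U then φ (f x) else 0) := by
  haveI := t2space_K (K := K)
  set F : (ι → K) → ℂ := fun x => if x ∈ U then φ (f x) else 0 with hF
  have himg : IsCompact (g '' tsupport φ) :=
    hφ.2.1.image_of_continuousOn (hgC.mono hφ.2.2)
  have hsupp : Function.support F ⊆ g '' tsupport φ := by
    intro x hx
    simp only [Function.mem_support, hF] at hx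
    by_cases hxU : x ∈ U
    · rw [if_pos hxU] at hx
      have hfx : f x ∈ tsupport φ := subset_closure hx
      exact ⟨f x, hfx, hgf x hxU⟩
    · rw [if_neg hxU] at hx; exact absurd rfl hx
  have hts : tsupport F ⊆ g '' tsupport φ :=
    closure_minimal hsupp himg.isClosed
  have htsU : tsupport F ⊆ U := hts.trans (by
    rintro _ ⟨z, hz, rfl⟩
    exact hgU (hφ.2.2 hz))
  refine ⟨?_, IsCompact.of_isClosed_subset himg isClosed_closure hts, htsU⟩
  rw [IsLocallyConstant.iff_exists_open]
  intro x
  by_cases hxU : x ∈ U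
  · obtain ⟨O, hOo, hfxO, hOc⟩ := hφ.1.exists_open (f x)
    have hcont : ContinuousAt f x := hfC.continuousAt (hUo.mem_nhds hxU)
    have hmem : f ⁻¹' O ∩ U ∈ nhds x :=
      Filter.inter_mem (hcont.preimage_mem_nhds (hOo.mem_nhds hfxO)) (hUo.mem_nhds hxU)
    obtain ⟨O₂, hO₂sub, hO₂o, hxO₂⟩ := mem_nhds_iff.1 hmem
    refine ⟨O₂, hO₂o, hxO₂, fun y hy => ?_⟩
    have hyU := (hO₂sub hy).2
    have hyO := (hO₂sub hy).1
    simp only [hF, if_pos hyU, if_pos hxU]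
    exact hOc (f y) hyO
  · have hxnot : x ∉ tsupport F := fun hc => hxU (htsU hc)
    refine ⟨(tsupport F)ᶜ, (isClosed_closure).isOpen_compl, hxnot, fun y hy => ?_⟩
    rw [image_eq_zero_of_notMem_tsupport hy, image_eq_zero_of_notMem_tsupport hxnot]

lemma pushOn_distribution {U U₁ : Set (ι → K)} (hUo : IsOpen U)
    {f g : (ι → K) → ι → K} (hgU : Set.MapsTo g U₁ U)
    (hgf : ∀ x ∈ U, g (f x) = x)
    (hfC : ContinuousOn f U) (hgC : ContinuousOn g U₁)
    {u : ((ι → K) → ℂ) → ℂ} (hu : IsDistributionOn U u) :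
    IsDistributionOn U₁ (pushOn U f u) := by
  constructor
  · intro c φ hφ
    show u (fun x => if x ∈ U then (c • φ) (f x) else 0)
      = c * u (fun x => if x ∈ U then φ (f x) else 0)
    have h1 : (fun x => if x ∈ U then (c • φ) (f x) else 0)
        = c • fun x => if x ∈ U then φ (f x) else 0 := by
      funext x
      by_cases hx : x ∈ U <;> simp [hx]
    rw [h1]
    exact hu.1 c _ (isSBOn_pullback hUo hgU hgf hfC hgC hφ)
  · intro φ₁ φ₂ h₁ h₂
    show u (fun x => if x ∈ U then (φ₁ + φ₂) (f x) else 0)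
      = u (fun x => if x ∈ U then φ₁ (f x) else 0) + u (fun x => if x ∈ U then φ₂ (f x) else 0)
    have h1 : (fun x => if x ∈ U then (φ₁ + φ₂) (f x) else 0)
        = (fun x => if x ∈ U then φ₁ (f x) else 0) + fun x => if x ∈ U then φ₂ (f x) else 0 := by
      funext x
      by_cases hx : x ∈ U <;> simp [hx]
    rw [h1]
    exact hu.2 _ _ (isSBOn_pullback hUo hgU hgf hfC hgC h₁)
      (isSBOn_pullback hUo hgU hgf hfC hgC h₂)

lemma lamSmoothAt_congr (hψ : IsStandardChar ψ) {Λ : Set K} {U : Set (ι → K)}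
    {u₁ u₂ : ((ι → K) → ℂ) → ℂ}
    (h : ∀ h' : (ι → K) → ℂ, IsSBOn U h' → u₁ h' = u₂ h')
    {x₀ ξ₀ : ι → K} (hs : LamSmoothAt ψ Λ U u₁ x₀ ξ₀) : LamSmoothAt ψ Λ U u₂ x₀ ξ₀ := by
  obtain ⟨U₀, V₀, hU₀o, hV₀o, hx, hξ, hmain⟩ := hs
  refine ⟨U₀, V₀, hU₀o, hV₀o, hx, hξ, ?_⟩
  intro φ hφ hsupp
  obtain ⟨N, hN⟩ := hmain φ hφ hsupp
  refine ⟨N, fun lam hlam hord ξ hξ' => ?_⟩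
  have hSB : IsSBOn U (fun x => φ x * ψ (∑ i, x i * (lam * ξ i))) := by
    refine IsSBOn.mul_lc hφ ?_
    have h0 : (fun x : ι → K => ψ (∑ i, x i * (lam * ξ i)))
        = fun x : ι → K => ψ ((0 : K) + ∑ i, x i * (lam * ξ i)) := by
      funext x; rw [zero_add]
    rw [h0]
    exact lc_char_linear ψ hψ _ _
  show u₂ (fun x => φ x * ψ (∑ i, x i * (lam * ξ i))) = 0
  rw [← h _ hSB]
  exact hN lam hlam hord ξ hξ'

lemma push_push_agree {U U₁ : Set (ι → K)} {f g : (ι → K) → ι → K}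
    (hfU : Set.MapsTo f U U₁) (hgf : ∀ x ∈ U, g (f x) = x)
    {u : ((ι → K) → ℂ) → ℂ} :
    ∀ h' : (ι → K) → ℂ, IsSBOn U h' → pushOn U₁ g (pushOn U f u) h' = u h' := by
  intro h' hh'
  show u (fun x => if x ∈ U then (if f x ∈ U₁ then h' (g (f x)) else 0) else 0) = u h'
  congr 1
  funext x
  by_cases hx : x ∈ U
  · rw [if_pos hx, if_pos (hfU hx), hgf x hx]
  · rw [if_neg hx]
    exact (image_eq_zero_of_notMem_tsupport fun hc => hx (hh'.2.2 hc)).symm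

lemma dot_mulVec (A : Matrix ι ι K) (v w : ι → K) :
    ∑ i, A.mulVec v i * w i = ∑ j, v j * Matrix.vecMul w A j := by
  simp only [Matrix.mulVec, Matrix.vecMul, dotProduct, Finset.sum_mul, Finset.mul_sum]
  rw [Finset.sum_comm]
  exact Finset.sum_congr rfl fun j _ => Finset.sum_congr rfl fun i _ => by ring

/-- Forward direction: microlocal smoothness is preserved under push-forward by a strict
`C¹` isomorphism. -/
lemma fwd_smooth {Λ : Set K} (hΛ : IsOpenFinIndexSubgroup Λ) (hψ : IsStandardChar ψ)
    {U U₁ : Set (ι → K)} (hUo : IsOpen U) (hU₁o : IsOpen U₁)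
    {f g : (ι → K) → ι → K} (hfU : Set.MapsTo f U U₁) (hgU : Set.MapsTo g U₁ U)
    (hgf : ∀ x ∈ U, g (f x) = x)
    (hfC : ContinuousOn f U) (hgC : ContinuousOn g U₁)
    {u : ((ι → K) → ℂ) → ℂ} (hu : IsDistributionOn U u)
    {x₀ : ι → K} (hx₀ : x₀ ∈ U) {A : Matrix ι ι K}
    (hA : HasStrictDerivWithin f A U x₀)
    {ξ₀ η₀ : ι → K} (hξ₀η₀ : ξ₀ = Matrix.vecMul η₀ A)
    (hsm : LamSmoothAt ψ Λ U u x₀ ξ₀) :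
    LamSmoothAt ψ Λ U₁ (pushOn U f u) (f x₀) η₀ := by
  classical
  obtain ⟨κ₀, c₀, N₀, hB₀U, hkeyU⟩ := smooth_uniform ψ hΛ hψ hUo hu hx₀ hsm
  obtain ⟨μA, hμA⟩ := exists_vecMul_bound A
  set d : ℤ := c₀ - μA with hd
  obtain ⟨e₁, he₁⟩ : ∃ e₁ : ℤ, ∀ η ∈ pball η₀ d, (e₁ : WithTop ℤ) ≤ ordVec η := by
    rcases eq_or_ne (ordVec η₀) ⊤ with htop | hne
    · refine ⟨d, fun η hη => ?_⟩
      have h0 : η₀ = 0 := ordVec_eq_top_iff.1 htop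
      rw [h0] at hη
      have := hη
      rw [mem_pball, zero_sub, ordVec_neg] at this
      exact this
    · obtain ⟨e₀, he₀⟩ := WithTop.ne_top_iff_exists.1 hne
      refine ⟨min e₀ d, fun η hη => ?_⟩
      have hid : η = η₀ - (η₀ - η) := by funext i; show η i = η₀ i - (η₀ i - η i); ring
      rw [hid]
      refine le_trans (le_min ?_ ?_) min_ordVec_le_sub
      · rw [← he₀]; exact WithTop.coe_le_coe.2 (min_le_left e₀ d)
      · exact le_trans (WithTop.coe_le_coe.2 (min_le_right e₀ d)) hη
  set c₁ : ℤ := c₀ - e₁ with hc₁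
  obtain ⟨r₁, hr₁⟩ := strict_deriv_ball hA c₁
  set κ₁ : ℤ := max (max r₁ κ₀) κ₀ with hκ₁
  have hκ₁κ₀ : κ₀ ≤ κ₁ := le_trans (le_max_right r₁ κ₀) (le_max_left _ _)
  have hκ₁r₁ : r₁ ≤ κ₁ := le_trans (le_max_left r₁ κ₀) (le_max_left _ _)
  have hB₁κ₀ : pball x₀ κ₁ ⊆ pball x₀ κ₀ := pball_mono hκ₁κ₀
  have hB₁U : pball x₀ κ₁ ⊆ U := hB₁κ₀.trans hB₀U
  have hB₁r₁ : pball x₀ κ₁ ⊆ pball x₀ r₁ := pball_mono hκ₁r₁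
  -- neighbourhoods
  refine ⟨U₁ ∩ g ⁻¹' pball x₀ κ₁, pball η₀ d,
    hgC.isOpen_inter_preimage hU₁o (isOpen_pball _ _), isOpen_pball _ _,
    ⟨hfU hx₀, by simp only [Set.mem_preimage]; rw [hgf x₀ hx₀]; exact mem_pball_self _ _⟩,
    mem_pball_self _ _, ?_⟩
  intro φ₁ hφ₁ hsupp₁
  set φ : (ι → K) → ℂ := fun x => if x ∈ U then φ₁ (f x) else 0 with hφdef
  have hφSB : IsSBOn U φ := isSBOn_pullback hUo hgU hgf hfC hgC hφ₁
  have hsuppφ : tsupport φ ⊆ pball x₀ κ₁ := by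
    refine closure_minimal ?_ (isClosed_pball _ _)
    intro x hx
    simp only [Function.mem_support, hφdef] at hx
    by_cases hxU : x ∈ U
    · rw [if_pos hxU] at hx
      have hfx : f x ∈ tsupport φ₁ := subset_closure hx
      have := hsupp₁ hfx
      have hgfx : g (f x) ∈ pball x₀ κ₁ := this.2
      rwa [hgf x hxU] at hgfx
    · rw [if_neg hxU] at hx; exact absurd rfl hx
  obtain ⟨m₀, hm₀⟩ := exists_uniform_scale hφSB.1 hφSB.2.1
  set κ₂ : ℤ := max m₀ κ₁ with hκ₂
  refine ⟨min N₀ (-c₀ - κ₂), ?_⟩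
  intro lam hlam hordlam η hηV
  have hlamne : lam ≠ 0 := hΛ.ne_zero lam hlam
  obtain ⟨ℓ, hℓ⟩ := exists_ord_eq hlamne
  have hℓN : ℓ < min N₀ (-c₀ - κ₂) := by
    rw [hℓ] at hordlam; exact_mod_cast hordlam
  set m : ℤ := max κ₂ (1 - c₁ - e₁ - ℓ) with hm
  have hmκ₂ : κ₂ ≤ m := le_max_left _ _
  have hmκ₁ : κ₁ ≤ m := le_trans (le_max_right m₀ κ₁) hmκ₂
  have hmκ₀ : κ₀ ≤ m := le_trans hκ₁κ₀ hmκ₁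
  have hm1 : 1 - c₁ - e₁ - ℓ ≤ m := le_max_right _ _
  have hmle : m ≤ 1 - c₀ - ℓ := by
    have h1 : κ₂ ≤ 1 - c₀ - ℓ := by omega
    have h2 : 1 - c₁ - e₁ - ℓ ≤ 1 - c₀ - ℓ := by omega
    omega
  set ξ : ι → K := Matrix.vecMul η A with hξdef
  have hξc : (c₀ : WithTop ℤ) ≤ ordVec (ξ₀ - ξ) := by
    have hid : ξ₀ - ξ = Matrix.vecMul (η₀ - η) A := by
      rw [hξ₀η₀, hξdef, Matrix.sub_vecMul]
    rw [hid]
    refine le_trans ?_ (hμA (η₀ - η))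
    calc (c₀ : WithTop ℤ) = ((μA + d : ℤ) : WithTop ℤ) := by rw [hd]; norm_num
      _ ≤ (μA : WithTop ℤ) + ordVec (η₀ - η) := by
          rw [WithTop.coe_add]; exact add_le_add le_rfl hηV
  have heη : (e₁ : WithTop ℤ) ≤ ordVec η := he₁ η hηV
  -- ball decomposition of the support
  obtain ⟨R, hRmem, hRcov, hRpw⟩ := exists_ball_cover (isCompact_pball x₀ κ₁) m
  have hRB₁ : ∀ a ∈ R, pball a m ⊆ pball x₀ κ₁ :=
    fun a ha => pball_subset_pball hmκ₁ (hRmem a ha)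
  -- the summand functions
  set Fn : (ι → K) → (ι → K) → ℂ := fun a x =>
    (φ a * ψ (lam * (∑ i, f a i * η i) - lam * (∑ i, a i * ξ i))) *
      ((if x ∈ pball a m then (1 : ℂ) else 0) * ψ (∑ i, x i * (lam * ξ i))) with hFn
  -- pointwise identity
  have hptw : (fun x => if x ∈ U then φ₁ (f x) * ψ (∑ i, f x i * (lam * η i)) else 0)
      = ∑ a ∈ R, Fn a := by
    funext x
    rw [Finset.sum_apply]
    have hstep : (if x ∈ U then φ₁ (f x) * ψ (∑ i, f x i * (lam * η i)) else 0)
        = φ x * ψ (∑ i, f x i * (lam * η i)) := by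
      by_cases hxU : x ∈ U
      · rw [if_pos hxU]; simp only [hφdef, if_pos hxU]
      · rw [if_neg hxU]; simp only [hφdef, if_neg hxU, zero_mul]
    rw [hstep]
    by_cases hxB₁ : x ∈ pball x₀ κ₁
    · -- x lies in exactly one ball of the decomposition
      obtain ⟨a, haR, hxa⟩ : ∃ a ∈ R, x ∈ pball a m := by
        have := hRcov hxB₁
        simpa only [Set.mem_iUnion, exists_prop] using this
      have huniq : ∀ b ∈ R, b ≠ a → x ∉ pball b m := by
        intro b hb hba hxb
        exact hRpw b hb a haR hba (exists_mem_of_ball_eq x hxb hxa)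
      rw [Finset.sum_eq_single_of_mem a haR (fun b hb hba => by
        simp only [hFn, if_neg (huniq b hb hba)]
        ring)]
      -- the phase identity on the ball `pball a m`
      have hxU : x ∈ U := hB₁U hxB₁
      have haB₁ : a ∈ pball x₀ κ₁ := hRmem a haR
      have haU : a ∈ U := hB₁U haB₁
      have hφxa : φ x = φ a :=
        hm₀ m (le_trans (le_max_left m₀ κ₁) hmκ₂) a x a hxa (mem_pball_self a m)
      have hAdot : ∑ i, A.mulVec (x - a) i * η i
          = (∑ i, x i * ξ i) - ∑ i, a i * ξ i := by
        rw [dot_mulVec, ← Finset.sum_sub_distrib]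
        exact Finset.sum_congr rfl fun j _ => by
          show (x j - a j) * Matrix.vecMul η A j = _
          rw [hξdef]; ring
      have hE : ∑ i, (f x i - f a i - A.mulVec (x - a) i) * η i
          = (∑ i, f x i * η i) - (∑ i, f a i * η i)
            - ((∑ i, x i * ξ i) - ∑ i, a i * ξ i) := by
        rw [← hAdot, ← Finset.sum_sub_distrib, ← Finset.sum_sub_distrib]
        exact Finset.sum_congr rfl fun i _ => by ring
      have hsplit : ∑ i, f x i * (lam * η i) =
          lam * (∑ i, (f x i - f a i - A.mulVec (x - a) i) * η i) +
            ((lam * (∑ i, f a i * η i) - lam * (∑ i, a i * ξ i)) +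
              ∑ i, x i * (lam * ξ i)) := by
        have h1 : ∑ i, f x i * (lam * η i) = lam * ∑ i, f x i * η i := by
          rw [Finset.mul_sum]; exact Finset.sum_congr rfl fun i _ => by ring
        have h2 : ∑ i, x i * (lam * ξ i) = lam * ∑ i, x i * ξ i := by
          rw [Finset.mul_sum]; exact Finset.sum_congr rfl fun i _ => by ring
        rw [h1, h2, hE]; ring
      have htriv : ψ (lam * (∑ i, (f x i - f a i - A.mulVec (x - a) i) * η i)) = 1 := by
        refine hψ.1 _ ?_
        have hxr : x ∈ pball x₀ r₁ ∩ U := ⟨hB₁r₁ hxB₁, hxU⟩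
        have har : a ∈ pball x₀ r₁ ∩ U := ⟨hB₁r₁ haB₁, haU⟩
        have herr := hr₁ x hxr a har
        have hxam : (m : WithTop ℤ) ≤ ordVec (x - a) := by
          rw [ordVec_sub_comm]; exact hxa
        have hvecbound : ((c₁ + m : ℤ) : WithTop ℤ) ≤
            ordVec (f x - f a - A.mulVec (x - a)) := by
          refine le_trans ?_ herr
          rw [WithTop.coe_add]
          exact add_le_add le_rfl hxam
        have hdotbound : ((c₁ + m + e₁ : ℤ) : WithTop ℤ) ≤
            ord (∑ i, (f x i - f a i - A.mulVec (x - a) i) * η i) := by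
          refine le_trans ?_ (ord_dot (f x - f a - A.mulVec (x - a)) η)
          rw [show ((c₁ + m + e₁ : ℤ) : WithTop ℤ)
              = ((c₁ + m : ℤ) : WithTop ℤ) + (e₁ : WithTop ℤ) by rw [← WithTop.coe_add]]
          exact add_le_add hvecbound heη
        rw [ord_mul, hℓ]
        calc (1 : WithTop ℤ) ≤ ((ℓ + (c₁ + m + e₁) : ℤ) : WithTop ℤ) := by
              exact_mod_cast (by omega : (1 : ℤ) ≤ ℓ + (c₁ + m + e₁))
          _ ≤ (ℓ : WithTop ℤ) + ord (∑ i, (f x i - f a i - A.mulVec (x - a) i) * η i) := by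
              rw [WithTop.coe_add]; exact add_le_add le_rfl hdotbound
      rw [hsplit, ψ.map_add_eq_mul, htriv, one_mul, ψ.map_add_eq_mul]
      simp only [hFn, if_pos hxa, hφxa]
      ring
    · -- outside the big ball everything vanishes
      have hφx : φ x = 0 := image_eq_zero_of_notMem_tsupport fun hc => hxB₁ (hsuppφ hc)
      rw [hφx, zero_mul]
      refine (Finset.sum_eq_zero fun a haR => ?_).symm
      have hxa : x ∉ pball a m := fun hc => hxB₁ (hRB₁ a haR hc)
      simp only [hFn, if_neg hxa]
      ring
  -- Schwartz–Bruhat property of the summands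
  have hFnSB : ∀ a ∈ R, IsSBOn U (Fn a) := by
    intro a haR
    have hind : IsSBOn U (fun x => (if x ∈ pball a m then (1 : ℂ) else 0) *
        ψ (∑ i, x i * (lam * ξ i))) := by
      refine IsSBOn.mul_lc (isSBOn_indicator_pball ((hRB₁ a haR).trans hB₁U)) ?_
      have h0 : (fun x : ι → K => ψ (∑ i, x i * (lam * ξ i)))
          = fun x : ι → K => ψ ((0 : K) + ∑ i, x i * (lam * ξ i)) := by
        funext x; rw [zero_add]
      rw [h0]
      exact lc_char_linear ψ hψ _ _
    exact hind.const_mul _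
  -- conclusion
  show u (fun x => if x ∈ U then φ₁ (f x) * ψ (∑ i, f x i * (lam * η i)) else 0) = 0
  rw [hptw, u_sum hu R Fn hFnSB]
  refine Finset.sum_eq_zero fun a haR => ?_
  have hsmul : Fn a = (φ a * ψ (lam * (∑ i, f a i * η i) - lam * (∑ i, a i * ξ i))) •
      fun x => (if x ∈ pball a m then (1 : ℂ) else 0) * ψ (∑ i, x i * (lam * ξ i)) := by
    funext x
    simp only [hFn, Pi.smul_apply, smul_eq_mul]
  rw [hsmul, hu.1 _ _ (by
    refine IsSBOn.mul_lc (isSBOn_indicator_pball ((hRB₁ a haR).trans hB₁U)) ?_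
    have h0 : (fun x : ι → K => ψ (∑ i, x i * (lam * ξ i)))
        = fun x : ι → K => ψ ((0 : K) + ∑ i, x i * (lam * ξ i)) := by
      funext x; rw [zero_add]
    rw [h0]
    exact lc_char_linear ψ hψ _ _)]
  have hvan : FTrans ψ u (fun x => if x ∈ pball a m then (1 : ℂ) else 0)
      (fun i => lam * ξ i) = 0 := by
    refine hkeyU a m (hB₁κ₀ (hRmem a haR)) hmκ₀ lam hlam ℓ hℓ ?_ hmle ξ hξc
    exact lt_of_lt_of_le hℓN (min_le_left _ _)
  rw [show u (fun x => (if x ∈ pball a m then (1 : ℂ) else 0) * ψ (∑ i, x i * (lam * ξ i)))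
      = FTrans ψ u (fun x => if x ∈ pball a m then (1 : ℂ) else 0) (fun i => lam * ξ i)
    from rfl, hvan, mul_zero]

end Aux

/-- Let `f : U → U₁` be a strict `C¹` isomorphism between two open
subsets of `K^n`, with differential `Df`, and let `u ∈ S'(U)`. Then `(x₀, ξ₀)` is
`Λ`-micro-locally smooth for `u` if and only if `(f(x₀), (ᵗDf(x₀))⁻¹ ξ₀)` is
`Λ`-micro-locally smooth for the push-forward `f_*u ∈ S'(U₁)`. -/
theorem lamSmoothAt_pushforward_iff {K : Type} [Field K] [TopologicalSpace K]
    [IsTopologicalRing K] [NALocalField K]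
    (ψ : AddChar K ℂ) (hψ : IsStandardChar ψ)
    (Λ : Set K) (hΛ : IsOpenFinIndexSubgroup Λ)
    {n : ℕ} (U U₁ : Set (Fin n → K)) (hU : IsOpen U) (hU₁ : IsOpen U₁)
    (f g : (Fin n → K) → Fin n → K)
    (hfU : Set.MapsTo f U U₁) (hgU : Set.MapsTo g U₁ U)
    (hgf : ∀ x ∈ U, g (f x) = x) (hfg : ∀ z ∈ U₁, f (g z) = z)
    (hf : StrictC1Within f U) (hg : StrictC1Within g U₁)
    (Df : (Fin n → K) → Matrix (Fin n) (Fin n) K)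
    (hDf : ∀ a ∈ U, HasStrictDerivWithin f (Df a) U a)
    (u : ((Fin n → K) → ℂ) → ℂ) (hu : IsDistributionOn U u)
    (x₀ ξ₀ : Fin n → K) (hx₀ : x₀ ∈ U) (hξ₀ : ξ₀ ≠ 0) (hinv : IsUnit (Df x₀)) :
    LamSmoothAt ψ Λ U u x₀ ξ₀ ↔
      LamSmoothAt ψ Λ U₁ (pushOn U f u) (f x₀) (Matrix.vecMul ξ₀ (Df x₀)⁻¹) := by
  have hdet : IsUnit (Df x₀).det := (Matrix.isUnit_iff_isUnit_det _).1 hinv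
  have hfC : ContinuousOn f U := strictC1_continuousOn hU hf
  have hgC : ContinuousOn g U₁ := strictC1_continuousOn hU₁ hg
  have hη : ξ₀ = Matrix.vecMul (Matrix.vecMul ξ₀ (Df x₀)⁻¹) (Df x₀) := by
    rw [Matrix.vecMul_vecMul, Matrix.nonsing_inv_mul _ hdet, Matrix.vecMul_one]
  constructor
  · intro hsm
    exact fwd_smooth ψ hΛ hψ hU hU₁ hfU hgU hgf hfC hgC hu hx₀ (hDf x₀ hx₀) hη hsm
  · intro hsm
    obtain ⟨B, hB⟩ := hg (f x₀) (hfU hx₀)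
    have hBA : B * Df x₀ = 1 := chain_inverse hfU hgf hU hx₀ (hDf x₀ hx₀) hB
    have hAB : Df x₀ * B = 1 := mul_eq_one_comm.1 hBA
    have hη' : Matrix.vecMul ξ₀ (Df x₀)⁻¹ = Matrix.vecMul ξ₀ B := by
      rw [Matrix.inv_eq_right_inv hAB]
    have hpush := fwd_smooth ψ hΛ hψ hU₁ hU hgU hfU hfg hgC hfC
      (pushOn_distribution hU hgU hgf hfC hgC hu) (hfU hx₀) hB hη' hsm
    rw [hgf x₀ hx₀] at hpush
    exact lamSmoothAt_congr ψ hψ (push_push_agree hfU hgf) hpush
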